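/- arXiv:2108.04916 — 8 statements merged into one kernel-verified Lean document; each statement's English description precedes it below -/
import Mathlib

section
/- For every constant c₁ with 0 < c₁ < ln(4/3), if X_n denotes a binomial random variable with parameters n and p = c₁/n, then P(X_n > n p) = 1 − (1 − c₁/n)^n converges, as n → ∞, to 1 − e^{−c₁}, which is strictly less than 1/4. Consequently, the constant factor c = ln(4/3) in the condition p ≥ c/n of the main theorem cannot be replaced by any smaller constant. -/
/-- For any `0 < c₁ < ln(4/3)`, with `p = c₁/n` one has
`P(X_n > n p) = 1 - (1 - c₁/n)^n → 1 - e^{-c₁} < 1/4` as `n → ∞`;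
hence the constant `c = ln(4/3)` cannot be replaced by any smaller constant. -/
theorem binomial_constant_optimal
    (c₁ : ℝ) (hc₁0 : 0 < c₁) (hc₁ : c₁ < Real.log (4 / 3)) :
    (∀ n : ℕ, 1 ≤ n →
      (∑ k ∈ (Finset.range (n + 1)).filter
            (fun k : ℕ => (n : ℝ) * (c₁ / n) < (k : ℝ)),
          (n.choose k : ℝ) * (c₁ / n) ^ k * (1 - c₁ / n) ^ (n - k))
        = 1 - (1 - c₁ / n) ^ n) ∧
    Filter.Tendsto (fun n : ℕ => 1 - (1 - c₁ / (n : ℝ)) ^ n)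
      Filter.atTop (nhds (1 - Real.exp (-c₁))) ∧
    1 - Real.exp (-c₁) < 1 / 4 := by
  have hlog : Real.log (4 / 3) ≤ 1 / 3 := by
    have := Real.log_le_sub_one_of_pos (x := 4 / 3) (by norm_num)
    linarith
  have hc1lt1 : c₁ < 1 := by linarith
  have hexp : 3 / 4 < Real.exp (-c₁) := by
    have h := Real.exp_lt_exp.mpr (neg_lt_neg hc₁)
    rwa [Real.exp_neg, Real.exp_log (by norm_num : (0:ℝ) < 4 / 3),
      show ((4:ℝ)/3)⁻¹ = 3/4 by norm_num] at h
  refine ⟨?_, ?_, by linarith⟩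
  · intro n hn
    have hn0 : (n : ℝ) ≠ 0 := Nat.cast_ne_zero.mpr (by omega)
    have hmul : (n : ℝ) * (c₁ / n) = c₁ := by field_simp
    have hfilter : (Finset.range (n + 1)).filter
        (fun k : ℕ => (n : ℝ) * (c₁ / n) < (k : ℝ)) = Finset.Ioc 0 n := by
      ext k
      simp only [Finset.mem_filter, Finset.mem_range, Finset.mem_Ioc, hmul,
        Nat.lt_succ_iff]
      constructor
      · rintro ⟨hk, hck⟩
        refine ⟨?_, hk⟩
        by_contra h
        push_neg at h
        interval_cases k
        exact absurd hck (by push_cast; linarith)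
      · rintro ⟨hk0, hk⟩
        exact ⟨hk, lt_of_lt_of_le hc1lt1 (by exact_mod_cast hk0)⟩
    have hins : Finset.range (n + 1) = insert 0 (Finset.Ioc 0 n) := by
      ext k; simp only [Finset.mem_range, Finset.mem_insert, Finset.mem_Ioc]; omega
    have htot : (∑ k ∈ Finset.range (n + 1),
        (n.choose k : ℝ) * (c₁ / n) ^ k * (1 - c₁ / n) ^ (n - k)) = 1 := by
      have h := add_pow (c₁ / n) (1 - c₁ / n) n
      have h1 : (c₁ / n + (1 - c₁ / n)) = 1 := by ring
      rw [h1, one_pow] at h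
      calc (∑ k ∈ Finset.range (n + 1),
          (n.choose k : ℝ) * (c₁ / n) ^ k * (1 - c₁ / n) ^ (n - k))
          = ∑ k ∈ Finset.range (n + 1),
            (c₁ / n) ^ k * (1 - c₁ / n) ^ (n - k) * (n.choose k : ℝ) :=
            Finset.sum_congr rfl fun k _ => by ring
        _ = 1 := h.symm
    rw [hfilter]
    have h0 : (0 : ℕ) ∉ Finset.Ioc 0 n := by simp
    have := htot
    rw [hins, Finset.sum_insert h0] at this
    simp only [Nat.choose_zero_right, Nat.cast_one, pow_zero, Nat.sub_zero,
      one_mul, mul_one] at this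
    linarith
  · have h := Real.tendsto_one_add_div_pow_exp (-c₁)
    have h' : Filter.Tendsto (fun n : ℕ => (1 - c₁ / (n : ℝ)) ^ n)
        Filter.atTop (nhds (Real.exp (-c₁))) := by
      convert h using 2 with n
      rw [sub_eq_add_neg, neg_div]
    exact Filter.Tendsto.const_sub 1 h'
end

section
/- Let X be a random variable with the binomial distribution with parameters n and p, let c := ln(4/3), and let b := (1 − e^{−c})/c = 1/(4 ln(4/3)) = 0.86901… . If 0 ≤ p ≤ c/n, then P(X > E[X]) = 1 − (1−p)^n ≥ max(1, b n) · p. -/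
/-- If `0 ≤ p ≤ c/n` with `c := ln(4/3)` and `b := (1 - e^{-c})/c`, then
`P(X > E X) = 1 - (1-p)^n ≥ max(1, b n) p`. -/
theorem binomial_prob_gt_mean_small_p
    (n : ℕ) (hn : 0 < n) (p : ℝ) (hp0 : 0 ≤ p)
    (hpc : p ≤ Real.log (4 / 3) / n) :
    (∑ k ∈ (Finset.range (n + 1)).filter (fun k : ℕ => (n : ℝ) * p < (k : ℝ)),
        (n.choose k : ℝ) * p ^ k * (1 - p) ^ (n - k)) = 1 - (1 - p) ^ n ∧
    max 1 ((1 - Real.exp (-Real.log (4 / 3))) / Real.log (4 / 3) * n) * p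
      ≤ 1 - (1 - p) ^ n := by
  set c := Real.log (4 / 3) with hc
  have hc0 : 0 < c := Real.log_pos (by norm_num)
  have hc1 : c < 1 := by
    have := Real.log_lt_sub_one_of_pos (by norm_num : (0:ℝ) < 4/3) (by norm_num)
    linarith
  have hn1 : (1:ℝ) ≤ (n:ℝ) := by exact_mod_cast hn
  have hn0 : (0:ℝ) < (n:ℝ) := by linarith
  have hnp : (n:ℝ) * p ≤ c := by
    have : (n:ℝ) * p ≤ (n:ℝ) * (c / n) := by
      exact mul_le_mul_of_nonneg_left hpc (le_of_lt hn0)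
    calc (n:ℝ) * p ≤ (n:ℝ) * (c / n) := this
      _ = c := by field_simp
  have hp1 : p ≤ 1 := by nlinarith
  have hq0 : 0 ≤ 1 - p := by linarith
  -- Part 1
  have hfilt : (Finset.range (n + 1)).filter (fun k : ℕ => (n : ℝ) * p < (k : ℝ))
      = (Finset.range (n + 1)).erase 0 := by
    ext k
    simp only [Finset.mem_filter, Finset.mem_erase, Finset.mem_range]
    constructor
    · rintro ⟨hk, hk2⟩
      refine ⟨fun h0 => ?_, hk⟩
      subst h0
      simp at hk2
      nlinarith
    · rintro ⟨hk0, hk⟩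
      refine ⟨hk, ?_⟩
      have : (1:ℝ) ≤ (k:ℝ) := by exact_mod_cast Nat.one_le_iff_ne_zero.mpr hk0
      linarith
  have hsum1 : ∑ k ∈ Finset.range (n + 1), (n.choose k : ℝ) * p ^ k * (1 - p) ^ (n - k) = 1 := by
    have h := add_pow p (1 - p) n
    have h2 : (p + (1 - p)) = (1:ℝ) := by ring
    rw [h2, one_pow] at h
    conv_rhs => rw [h]
    apply Finset.sum_congr rfl
    intro k _
    ring
  have part1 : (∑ k ∈ (Finset.range (n + 1)).filter (fun k : ℕ => (n : ℝ) * p < (k : ℝ)),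
      (n.choose k : ℝ) * p ^ k * (1 - p) ^ (n - k)) = 1 - (1 - p) ^ n := by
    rw [hfilt]
    have h0mem : (0:ℕ) ∈ Finset.range (n + 1) := by simp
    have := Finset.add_sum_erase (Finset.range (n + 1))
      (fun k => (n.choose k : ℝ) * p ^ k * (1 - p) ^ (n - k)) h0mem
    simp only [Nat.choose_zero_right, Nat.cast_one, pow_zero, Nat.sub_zero, one_mul, mul_one] at this
    rw [hsum1] at this
    linarith [this]
  refine ⟨part1, ?_⟩
  -- Part 2
  -- key convexity inequality
  set t := (n:ℝ) * p / c with ht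
  have ht0 : 0 ≤ t := by positivity
  have ht1 : t ≤ 1 := by
    rw [ht, div_le_one hc0]; exact hnp
  have hcn0 : 0 ≤ 1 - c / n := by
    have : c / n ≤ c := by
      apply div_le_self (le_of_lt hc0) hn1
    linarith
  have hptc : 1 - p = (1 - t) * 1 + t * (1 - c / n) := by
    have : t * (c / n) = p := by
      rw [ht]; field_simp
    nlinarith [this]
  have hconv : (1 - p) ^ n ≤ (1 - t) * 1 ^ n + t * (1 - c / n) ^ n := by
    have h := (convexOn_pow n).2 (Set.mem_Ici.mpr (by norm_num : (0:ℝ) ≤ 1))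
      (Set.mem_Ici.mpr hcn0) (by linarith : (0:ℝ) ≤ 1 - t) ht0 (by ring)
    simp only [smul_eq_mul] at h
    rw [hptc]
    exact h
  have hexp : (1 - c / n) ^ n ≤ Real.exp (-c) := by
    have h1 : 1 - c / n ≤ Real.exp (-(c / n)) := by
      have := Real.add_one_le_exp (-(c / n))
      linarith
    have h2 : (Real.exp (-(c / n))) ^ n = Real.exp (-c) := by
      rw [← Real.exp_nat_mul]
      congr 1
      field_simp
    calc (1 - c / n) ^ n ≤ (Real.exp (-(c / n))) ^ n := pow_le_pow_left₀ hcn0 h1 n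
      _ = Real.exp (-c) := h2
  have hbnp : (1 - Real.exp (-c)) / c * n * p ≤ 1 - (1 - p) ^ n := by
    have hb : (1 - Real.exp (-c)) / c * n * p = (1 - Real.exp (-c)) * t := by
      rw [ht]; field_simp
    rw [hb]
    have h3 : t * (1 - c / n) ^ n ≤ t * Real.exp (-c) :=
      mul_le_mul_of_nonneg_left hexp ht0
    have hconv' : (1 - p) ^ n ≤ (1 - t) + t * (1 - c / n) ^ n := by
      have := hconv; rw [one_pow] at this; linarith
    linarith
  have hpbound : p ≤ 1 - (1 - p) ^ n := by
    have : (1 - p) ^ n ≤ (1 - p) ^ 1 :=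
      pow_le_pow_of_le_one hq0 (by linarith) hn
    simp at this
    linarith
  rcases le_total ((1 - Real.exp (-c)) / c * n) 1 with h | h
  · rw [max_eq_left h, one_mul]; exact hpbound
  · rw [max_eq_right h]; exact hbnp
end

section
/- Let m ≥ 2 and j ≥ m be integers. Then P(X_{j+1, (m−1)/(j+1)} ≥ m) > P(X_{j, (m−1)/j} ≥ m), where X_{n,p} denotes a binomial random variable with parameters n and p. That is, the probability that a binomial random variable with parameters j and (m−1)/j is at least m is strictly increasing in the integer j ≥ m. -/
open Finset

namespace BinomTailAux

/-- Tail probability `P(Bin(j,p) ≥ m)` as a polynomial expression. -/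
noncomputable def F (j m : ℕ) (p : ℝ) : ℝ :=
  ∑ k ∈ Icc m j, (j.choose k : ℝ) * p ^ k * (1 - p) ^ (j - k)

/-- `P(Bin(j,p) = m-1)`. -/
noncomputable def B (j m : ℕ) (p : ℝ) : ℝ :=
  (j.choose (m - 1) : ℝ) * p ^ (m - 1) * (1 - p) ^ (j - (m - 1))

/-- The interpolation function. -/
noncomputable def f (j m : ℕ) (p : ℝ) : ℝ :=
  F j m p + ((m : ℝ) - 1 - j * p) * B j m p

lemma endpoint (j n : ℕ) (hnj : n ≤ j) (q : ℝ) :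
    ∑ k ∈ Icc (n + 1) (j + 1), ((j + 1).choose k : ℝ) * q ^ k * (1 - q) ^ (j + 1 - k)
      = F j (n + 1) q + q * B j (n + 1) q := by
  have hB : B j (n + 1) q = (j.choose n : ℝ) * q ^ n * (1 - q) ^ (j - n) := by
    simp [B]
  have hF : F j (n + 1) q
      = ∑ i ∈ range (j - n), (j.choose (n + 1 + i) : ℝ) * q ^ (n + 1 + i)
          * (1 - q) ^ (j - (n + 1 + i)) := by
    rw [F, ← Finset.Ico_add_one_right_eq_Icc, Finset.sum_Ico_eq_sum_range]
    have : j + 1 - (n + 1) = j - n := by omega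
    rw [this]
  rw [← Finset.Ico_add_one_right_eq_Icc, Finset.sum_Ico_eq_sum_range]
  have hc : j + 1 + 1 - (n + 1) = (j - n) + 1 := by omega
  rw [hc]
  have hsplit : ∀ i ∈ range (j - n + 1),
      ((j + 1).choose (n + 1 + i) : ℝ) * q ^ (n + 1 + i) * (1 - q) ^ (j + 1 - (n + 1 + i))
      = (j.choose (n + i) : ℝ) * q ^ (n + 1 + i) * (1 - q) ^ (j - (n + i))
        + (j.choose (n + 1 + i) : ℝ) * q ^ (n + 1 + i) * (1 - q) ^ (j - (n + i)) := by
    intro i _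
    have h1 : n + 1 + i = (n + i) + 1 := by omega
    have h2 : j + 1 - (n + 1 + i) = j - (n + i) := by omega
    rw [h2, h1, Nat.choose_succ_succ]
    push_cast
    ring
  rw [Finset.sum_congr rfl hsplit, Finset.sum_add_distrib]
  have hS2 : ∑ i ∈ range (j - n + 1),
      (j.choose (n + 1 + i) : ℝ) * q ^ (n + 1 + i) * (1 - q) ^ (j - (n + i))
      = (1 - q) * F j (n + 1) q := by
    rw [Finset.sum_range_succ]
    have hz : j.choose (n + 1 + (j - n)) = 0 :=
      Nat.choose_eq_zero_of_lt (by omega)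
    rw [hz]
    rw [hF, Finset.mul_sum]
    simp only [Nat.cast_zero, zero_mul, mul_zero, add_zero]
    refine Finset.sum_congr rfl ?_
    intro i hi
    have hi' : i < j - n := Finset.mem_range.mp hi
    have h3 : j - (n + i) = (j - (n + 1 + i)) + 1 := by omega
    rw [h3, pow_succ]
    ring
  have hS1 : ∑ i ∈ range (j - n + 1),
      (j.choose (n + i) : ℝ) * q ^ (n + 1 + i) * (1 - q) ^ (j - (n + i))
      = q * B j (n + 1) q + q * F j (n + 1) q := by
    rw [Finset.sum_range_succ']
    have h0 : (j.choose (n + 0) : ℝ) * q ^ (n + 1 + 0) * (1 - q) ^ (j - (n + 0))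
        = q * B j (n + 1) q := by
      rw [hB]
      simp [pow_succ]
      ring
    rw [h0, hF, Finset.mul_sum]
    have : ∀ i ∈ range (j - n),
        (j.choose (n + (i + 1)) : ℝ) * q ^ (n + 1 + (i + 1)) * (1 - q) ^ (j - (n + (i + 1)))
        = q * ((j.choose (n + 1 + i) : ℝ) * q ^ (n + 1 + i) * (1 - q) ^ (j - (n + 1 + i))) := by
      intro i _
      have h4 : n + (i + 1) = n + 1 + i := by omega
      have h5 : n + 1 + (i + 1) = (n + 1 + i) + 1 := by omega
      rw [h4, h5, pow_succ]
      ring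
    rw [Finset.sum_congr rfl this]
    ring
  rw [hS1, hS2]
  ring

lemma hasDerivAt_mul_pow (a b : ℕ) (x : ℝ) :
    HasDerivAt (fun p : ℝ => p ^ a * (1 - p) ^ b)
      ((a : ℝ) * x ^ (a - 1) * (1 - x) ^ b - (b : ℝ) * x ^ a * (1 - x) ^ (b - 1)) x := by
  have h1 : HasDerivAt (fun p : ℝ => p ^ a) ((a : ℝ) * x ^ (a - 1)) x := hasDerivAt_pow a x
  have h0 : HasDerivAt (fun p : ℝ => 1 - p) (-1 : ℝ) x := by
    simpa using (hasDerivAt_id x).const_sub 1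
  have h2 : HasDerivAt (fun p : ℝ => (1 - p) ^ b)
      ((b : ℝ) * (1 - x) ^ (b - 1) * (-1)) x := by
    have := (hasDerivAt_pow b (1 - x)).comp x h0
    simpa [Function.comp_def] using this
  have : HasDerivAt (fun p : ℝ => p ^ a * (1 - p) ^ b)
      ((a : ℝ) * x ^ (a - 1) * (1 - x) ^ b + x ^ a * ((b : ℝ) * (1 - x) ^ (b - 1) * (-1))) x :=
    h1.fun_mul h2
  convert this using 1
  ring

lemma term_eq (j k : ℕ) (hk1 : 1 ≤ k) (hkj : k ≤ j) (x : ℝ) :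
    (j.choose k : ℝ) * ((k : ℝ) * x ^ (k - 1) * (1 - x) ^ (j - k)
        - ((j - k : ℕ) : ℝ) * x ^ k * (1 - x) ^ (j - k - 1))
    = (j : ℝ) * ((j - 1).choose (k - 1) : ℝ) * x ^ (k - 1) * (1 - x) ^ ((j - 1) - (k - 1))
      - (j : ℝ) * ((j - 1).choose k : ℝ) * x ^ k * (1 - x) ^ ((j - 1) - k) := by
  obtain ⟨k, rfl⟩ : ∃ k', k = k' + 1 := ⟨k - 1, by omega⟩
  obtain ⟨j, rfl⟩ : ∃ j', j = j' + 1 := ⟨j - 1, by omega⟩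
  have e1 : j + 1 - (k + 1) = j - k := by omega
  have e2 : k + 1 - 1 = k := by omega
  have e3 : j + 1 - 1 = j := by omega
  have e5 : j - k - 1 = j - (k + 1) := by omega
  rw [e1, e2, e3, e5]
  have h1n : (k + 1) * ((j + 1).choose (k + 1)) = (j + 1) * j.choose k := by
    simpa [Nat.succ_eq_add_one, mul_comm] using (Nat.add_one_mul_choose_eq j k).symm
  have h2n : (j - k) * ((j + 1).choose (k + 1)) = (j + 1) * j.choose (k + 1) := by
    have ha := Nat.choose_succ_right_eq (j + 1) (k + 1)
    have hb := Nat.add_one_mul_choose_eq j (k + 1)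
    have e : j + 1 - (k + 1) = j - k := by omega
    rw [e] at ha
    rw [mul_comm, ← ha, ← hb]
  have h1 : ((k : ℝ) + 1) * ((j + 1).choose (k + 1) : ℝ)
      = ((j : ℝ) + 1) * (j.choose k : ℝ) := by exact_mod_cast congrArg (Nat.cast (R := ℝ)) h1n
  have h2 : ((j - k : ℕ) : ℝ) * ((j + 1).choose (k + 1) : ℝ)
      = ((j : ℝ) + 1) * (j.choose (k + 1) : ℝ) := by
    exact_mod_cast congrArg (Nat.cast (R := ℝ)) h2n
  push_cast
  linear_combination (x ^ k * (1 - x) ^ (j - k)) * h1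
    - (x ^ (k + 1) * (1 - x) ^ (j - (k + 1))) * h2

lemma hasDerivAt_F (j m : ℕ) (hm : 1 ≤ m) (hmj : m ≤ j) (x : ℝ) :
    HasDerivAt (F j m)
      ((j : ℝ) * ((j - 1).choose (m - 1) : ℝ) * x ^ (m - 1) * (1 - x) ^ (j - m)) x := by
  have hsum : HasDerivAt (fun p : ℝ => ∑ k ∈ Icc m j, (j.choose k : ℝ) * p ^ k * (1 - p) ^ (j - k))
      (∑ k ∈ Icc m j,
        ((j : ℝ) * ((j - 1).choose (k - 1) : ℝ) * x ^ (k - 1) * (1 - x) ^ ((j - 1) - (k - 1))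
          - (j : ℝ) * ((j - 1).choose k : ℝ) * x ^ k * (1 - x) ^ ((j - 1) - k))) x := by
    apply HasDerivAt.fun_sum
    intro k hk
    obtain ⟨hk1, hk2⟩ := Finset.mem_Icc.mp hk
    have h := (hasDerivAt_mul_pow k (j - k) x).const_mul (j.choose k : ℝ)
    rw [← term_eq j k (le_trans hm hk1) hk2 x]
    simpa [mul_assoc] using h
  have htel : (∑ k ∈ Icc m j,
        ((j : ℝ) * ((j - 1).choose (k - 1) : ℝ) * x ^ (k - 1) * (1 - x) ^ ((j - 1) - (k - 1))
          - (j : ℝ) * ((j - 1).choose k : ℝ) * x ^ k * (1 - x) ^ ((j - 1) - k)))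
      = (j : ℝ) * ((j - 1).choose (m - 1) : ℝ) * x ^ (m - 1) * (1 - x) ^ ((j - 1) - (m - 1)) := by
    set D : ℕ → ℝ := fun k => (j : ℝ) * ((j - 1).choose k : ℝ) * x ^ k * (1 - x) ^ ((j - 1) - k)
      with hD
    have hterm : ∀ k ∈ Icc m j,
        ((j : ℝ) * ((j - 1).choose (k - 1) : ℝ) * x ^ (k - 1) * (1 - x) ^ ((j - 1) - (k - 1))
          - (j : ℝ) * ((j - 1).choose k : ℝ) * x ^ k * (1 - x) ^ ((j - 1) - k))
        = D (k - 1) - D k := fun k _ => rfl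
    rw [Finset.sum_congr rfl hterm, ← Finset.Ico_add_one_right_eq_Icc, Finset.sum_Ico_eq_sum_range]
    have hre : ∀ i ∈ range (j + 1 - m), D (m + i - 1) - D (m + i)
        = (fun i => D (m - 1 + i)) i - (fun i => D (m - 1 + i)) (i + 1) := by
      intro i _
      have e1 : m + i - 1 = m - 1 + i := by omega
      have e2 : m + i = m - 1 + (i + 1) := by omega
      rw [e1, e2]
    rw [Finset.sum_congr rfl hre, Finset.sum_range_sub' (fun i => D (m - 1 + i))]
    have e3 : m - 1 + (j + 1 - m) = j := by omega
    have e4 : m - 1 + 0 = m - 1 := by omega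
    rw [e3, e4]
    have hz : (j - 1).choose j = 0 := Nat.choose_eq_zero_of_lt (by omega)
    simp [hD, hz]
  have := htel ▸ hsum
  have e5 : (j - 1) - (m - 1) = j - m := by omega
  rw [e5] at this
  exact this

lemma hasDerivAt_B (j m : ℕ) (x : ℝ) :
    HasDerivAt (B j m)
      ((j.choose (m - 1) : ℝ) * (((m - 1 : ℕ) : ℝ) * x ^ (m - 1 - 1) * (1 - x) ^ (j - (m - 1))
        - ((j - (m - 1) : ℕ) : ℝ) * x ^ (m - 1) * (1 - x) ^ (j - (m - 1) - 1))) x := by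
  have h := (hasDerivAt_mul_pow (m - 1) (j - (m - 1)) x).const_mul (j.choose (m - 1) : ℝ)
  have : B j m = fun p : ℝ => (j.choose (m - 1) : ℝ) * (p ^ (m - 1) * (1 - p) ^ (j - (m - 1))) := by
    funext p; rw [B]; ring
  rw [this]
  exact h

lemma choose_id (j k : ℕ) (hk : k < j) :
    j * ((j - 1).choose k) = (j - k) * (j.choose k) := by
  obtain ⟨j, rfl⟩ : ∃ j', j = j' + 1 := ⟨j - 1, by omega⟩
  have hb := Nat.add_one_mul_choose_eq j k
  have ha := Nat.choose_succ_right_eq (j + 1) k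
  simp only [Nat.succ_eq_add_one, Nat.add_sub_cancel] at ha hb ⊢
  rw [hb, ha]
  exact Nat.mul_comm _ _

end BinomTailAux

namespace BinomTailAux

lemma hasDerivAt_f (j m : ℕ) (hm : 2 ≤ m) (hmj : m ≤ j) (x : ℝ) :
    HasDerivAt (f j m)
      ((j : ℝ) * ((j - 1).choose (m - 1) : ℝ) * x ^ (m - 1) * (1 - x) ^ (j - m)
        + ((-(j : ℝ)) * B j m x
          + ((m : ℝ) - 1 - j * x)
            * ((j.choose (m - 1) : ℝ)
              * (((m - 1 : ℕ) : ℝ) * x ^ (m - 1 - 1) * (1 - x) ^ (j - (m - 1))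
                - ((j - (m - 1) : ℕ) : ℝ) * x ^ (m - 1) * (1 - x) ^ (j - (m - 1) - 1))))) x := by
  have hF := hasDerivAt_F j m (by omega) hmj x
  have hB := hasDerivAt_B j m x
  have hr : HasDerivAt (fun p : ℝ => (m : ℝ) - 1 - (j : ℝ) * p) (-(j : ℝ)) x := by
    simpa using ((hasDerivAt_id x).const_mul (j : ℝ)).const_sub ((m : ℝ) - 1)
  have := hF.add (hr.mul hB)
  exact this

lemma deriv_neg (j m : ℕ) (hm : 2 ≤ m) (hmj : m ≤ j) (x : ℝ)
    (hx1 : ((m : ℝ) - 1) / ((j : ℝ) + 1) < x) (hx2 : x < ((m : ℝ) - 1) / (j : ℝ)) :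
    (j : ℝ) * ((j - 1).choose (m - 1) : ℝ) * x ^ (m - 1) * (1 - x) ^ (j - m)
      + ((-(j : ℝ)) * B j m x
        + ((m : ℝ) - 1 - j * x)
          * ((j.choose (m - 1) : ℝ)
            * (((m - 1 : ℕ) : ℝ) * x ^ (m - 1 - 1) * (1 - x) ^ (j - (m - 1))
              - ((j - (m - 1) : ℕ) : ℝ) * x ^ (m - 1) * (1 - x) ^ (j - (m - 1) - 1)))) < 0 := by
  obtain ⟨μ, rfl⟩ : ∃ μ, m = μ + 2 := ⟨m - 2, by omega⟩
  obtain ⟨b, rfl⟩ : ∃ b, j = μ + 2 + b := ⟨j - (μ + 2), by omega⟩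
  have e1 : μ + 2 - 1 = μ + 1 := by omega
  have e2 : μ + 2 + b - (μ + 2) = b := by omega
  have e3 : μ + 2 + b - 1 = μ + 1 + b := by omega
  have e4 : μ + 2 + b - (μ + 1) = b + 1 := by omega
  have e5 : μ + 1 - 1 = μ := by omega
  have e6 : b + 1 - 1 = b := by omega
  rw [B, e1, e2, e3, e4, e5, e6]
  -- cast facts
  have hc : ((μ + 2 + b : ℕ) : ℝ) * (((μ + 1 + b).choose (μ + 1)) : ℝ)
      = ((b + 1 : ℕ) : ℝ) * (((μ + 2 + b).choose (μ + 1)) : ℝ) := by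
    have h := choose_id (μ + 2 + b) (μ + 1) (by omega)
    rw [e3, e4] at h
    exact_mod_cast congrArg (Nat.cast (R := ℝ)) h
  -- positivity facts
  have hx1' : ((μ : ℝ) + 1) / ((μ : ℝ) + 2 + (b : ℝ) + 1) < x := by
    have : ((μ + 2 + b : ℕ) : ℝ) = (μ : ℝ) + 2 + (b : ℝ) := by push_cast; ring
    rw [this] at hx1
    convert hx1 using 2 <;> push_cast <;> ring
  have hx2' : x < ((μ : ℝ) + 1) / ((μ : ℝ) + 2 + (b : ℝ)) := by
    have : ((μ + 2 + b : ℕ) : ℝ) = (μ : ℝ) + 2 + (b : ℝ) := by push_cast; ring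
    rw [this] at hx2
    convert hx2 using 2 <;> push_cast <;> ring
  have hJ : (0 : ℝ) < (μ : ℝ) + 2 + (b : ℝ) := by positivity
  have hx0 : 0 < x := lt_trans (by positivity) hx1'
  have hx1lt : x < 1 := by
    refine lt_trans hx2' ?_
    rw [div_lt_one hJ]
    have : (0:ℝ) ≤ (b:ℝ) := Nat.cast_nonneg b
    linarith
  have h1x : 0 < 1 - x := by linarith
  have hcpos : (0 : ℝ) < (((μ + 2 + b).choose (μ + 1)) : ℝ) := by
    exact_mod_cast Nat.choose_pos (by omega)
  -- the factorization
  have hfac1 : 0 < ((μ : ℝ) + 2 + (b : ℝ) + 1) * x - ((μ : ℝ) + 1) := by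
    have := (div_lt_iff₀ (by positivity : (0:ℝ) < (μ : ℝ) + 2 + (b : ℝ) + 1)).mp hx1'
    linarith
  have hfac2 : 0 < ((μ : ℝ) + 1) - ((μ : ℝ) + 2 + (b : ℝ)) * x := by
    have := (lt_div_iff₀ hJ).mp hx2'
    linarith
  have key : (↑(μ + 2 + b) : ℝ) * (((μ + 1 + b).choose (μ + 1)) : ℝ) * x ^ (μ + 1)
        * (1 - x) ^ b
      + ((-(↑(μ + 2 + b) : ℝ)) * ((((μ + 2 + b).choose (μ + 1)) : ℝ) * x ^ (μ + 1)
          * (1 - x) ^ (b + 1))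
        + ((↑(μ + 2) : ℝ) - 1 - (↑(μ + 2 + b) : ℝ) * x)
          * ((((μ + 2 + b).choose (μ + 1)) : ℝ)
            * (((μ + 1 : ℕ) : ℝ) * x ^ μ * (1 - x) ^ (b + 1)
              - ((b + 1 : ℕ) : ℝ) * x ^ (μ + 1) * (1 - x) ^ b)))
      = -((((μ + 2 + b).choose (μ + 1)) : ℝ) * x ^ μ * (1 - x) ^ b
          * ((((μ : ℝ) + 2 + (b : ℝ) + 1) * x - ((μ : ℝ) + 1))
            * (((μ : ℝ) + 1) - ((μ : ℝ) + 2 + (b : ℝ)) * x))) := by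
    push_cast at hc ⊢
    linear_combination (x ^ (μ + 1) * (1 - x) ^ b) * hc
  rw [key]
  have hpos : 0 < (((μ + 2 + b).choose (μ + 1)) : ℝ) * x ^ μ * (1 - x) ^ b
      * ((((μ : ℝ) + 2 + (b : ℝ) + 1) * x - ((μ : ℝ) + 1))
        * (((μ : ℝ) + 1) - ((μ : ℝ) + 2 + (b : ℝ)) * x)) := by
    apply mul_pos
    apply mul_pos
    apply mul_pos hcpos (pow_pos hx0 μ)
    exact pow_pos h1x b
    exact mul_pos hfac1 hfac2
  linarith

end BinomTailAux

open BinomTailAux in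
/-- For integers `m ≥ 2` and `j ≥ m`, `P(X_{j+1,(m-1)/(j+1)} ≥ m) > P(X_{j,(m-1)/j} ≥ m)`:
the probability that a binomial with parameters `j` and `(m-1)/j` is at least `m` is
strictly increasing in the integer `j ≥ m`. -/
theorem binomial_tail_strict_mono_in_n
    (m j : ℕ) (hm : 2 ≤ m) (hj : m ≤ j) :
    (∑ k ∈ Finset.Icc m j,
        (j.choose k : ℝ) * (((m : ℝ) - 1) / j) ^ k * (1 - ((m : ℝ) - 1) / j) ^ (j - k))
    < ∑ k ∈ Finset.Icc m (j + 1),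
        ((j + 1).choose k : ℝ) * (((m : ℝ) - 1) / (j + 1)) ^ k
          * (1 - ((m : ℝ) - 1) / (j + 1)) ^ (j + 1 - k) := by
  have hjR : (0 : ℝ) < j := by
    have : 0 < j := by omega
    exact_mod_cast this
  have hmR : (0 : ℝ) < (m : ℝ) - 1 := by
    have : (2 : ℝ) ≤ (m : ℝ) := by exact_mod_cast hm
    linarith
  set pj : ℝ := ((m : ℝ) - 1) / j with hpj
  set p' : ℝ := ((m : ℝ) - 1) / ((j : ℝ) + 1) with hp'
  have hlt : p' < pj := by
    rw [hpj, hp']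
    apply div_lt_div_of_pos_left hmR hjR
    linarith
  -- f is strictly decreasing on [p', pj]
  have anti : StrictAntiOn (f j m) (Set.Icc p' pj) := by
    apply strictAntiOn_of_deriv_neg (convex_Icc _ _)
    · intro y _
      exact (hasDerivAt_f j m hm hj y).continuousAt.continuousWithinAt
    · intro y hy
      rw [interior_Icc] at hy
      rw [(hasDerivAt_f j m hm hj y).deriv]
      exact deriv_neg j m hm hj y hy.1 hy.2
  have key := anti (Set.left_mem_Icc.mpr hlt.le) (Set.right_mem_Icc.mpr hlt.le) hlt
  -- identify the endpoints
  have hL : f j m pj = F j m pj := by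
    rw [f]
    have : (m : ℝ) - 1 - (j : ℝ) * pj = 0 := by
      rw [hpj]
      field_simp
      ring
    rw [this, zero_mul, add_zero]
  have hR : f j m p' = ∑ k ∈ Finset.Icc m (j + 1),
      ((j + 1).choose k : ℝ) * p' ^ k * (1 - p') ^ (j + 1 - k) := by
    obtain ⟨n, rfl⟩ : ∃ n, m = n + 1 := ⟨m - 1, by omega⟩
    rw [endpoint j n (by omega) p', f]
    have : (↑(n + 1) : ℝ) - 1 - (j : ℝ) * p' = p' := by
      rw [hp']
      push_cast
      field_simp
      ring
    rw [this]
  calc (∑ k ∈ Finset.Icc m j,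
        (j.choose k : ℝ) * pj ^ k * (1 - pj) ^ (j - k))
      = f j m pj := hL.symm
    _ < f j m p' := key
    _ = _ := hR
end

section
/- Let m ≥ 2 and n ≥ m be integers, and let X_{n,(m−1)/n} denote a binomial random variable with parameters n and (m−1)/n. Then P(X_{n,(m−1)/n} ≥ m) ≥ ((m−1)/m)^m, and the inequality is strict unless n = m. -/
open Finset

noncomputable def binTail (m N : ℕ) (p : ℝ) : ℝ :=
  ∑ k ∈ Finset.Icc m N, (N.choose k : ℝ) * p ^ k * (1 - p) ^ (N - k)

lemma binTail_pascal (m n : ℕ) (hm : 1 ≤ m) (hn : m ≤ n) (p : ℝ) :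
    binTail m (n+1) p
      = binTail m n p + (n.choose (m-1) : ℝ) * p ^ m * (1 - p) ^ (n + 1 - m) := by
  obtain ⟨a, rfl⟩ : ∃ a, m = a + 1 := ⟨m - 1, by omega⟩
  have han : a + 1 ≤ n := hn
  have hmap : binTail (a+1) (n+1) p
      = ∑ j ∈ Icc a n, ((n+1).choose (j+1) : ℝ) * p ^ (j+1) * (1 - p) ^ (n - j) := by
    rw [binTail, ← Finset.map_add_right_Icc a n 1, Finset.sum_map]
    apply Finset.sum_congr rfl
    intro j hj
    simp only [addRightEmbedding_apply]
    congr 2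
    omega
  have hsplit : binTail (a+1) (n+1) p
      = (∑ j ∈ Icc a n, (n.choose j : ℝ) * p ^ (j+1) * (1 - p) ^ (n - j))
        + ∑ j ∈ Icc a n, (n.choose (j+1) : ℝ) * p ^ (j+1) * (1 - p) ^ (n - j) := by
    rw [hmap, ← Finset.sum_add_distrib]
    apply Finset.sum_congr rfl
    intro j hj
    rw [Nat.choose_succ_succ]
    push_cast
    ring
  have h2 : ∑ j ∈ Icc a n, (n.choose (j+1) : ℝ) * p ^ (j+1) * (1 - p) ^ (n - j)
      = (1 - p) * binTail (a+1) n p := by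
    have hL : ∑ j ∈ Icc a n, (n.choose (j+1) : ℝ) * p ^ (j+1) * (1 - p) ^ (n - j)
        = ∑ i ∈ Icc (a+1) (n+1), (n.choose i : ℝ) * p ^ i * (1 - p) ^ (n + 1 - i) := by
      rw [← Finset.map_add_right_Icc a n 1, Finset.sum_map]
      apply Finset.sum_congr rfl
      intro j hj
      simp only [addRightEmbedding_apply]
      congr 2
      omega
    rw [hL, Finset.sum_Icc_succ_top (by omega), Nat.choose_succ_self]
    rw [binTail, Finset.mul_sum]
    simp only [Nat.cast_zero, zero_mul, add_zero]
    apply Finset.sum_congr rfl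
    intro i hi
    simp only [Finset.mem_Icc] at hi
    have : n + 1 - i = (n - i) + 1 := by omega
    rw [this, pow_succ]
    ring
  have h1 : ∑ j ∈ Icc a n, (n.choose j : ℝ) * p ^ (j+1) * (1 - p) ^ (n - j)
      = p * binTail (a+1) n p + (n.choose a : ℝ) * p ^ (a+1) * (1 - p) ^ (n - a) := by
    rw [Finset.Icc_eq_cons_Ioc (by omega), Finset.sum_cons, ← Finset.Icc_add_one_left_eq_Ioc]
    rw [binTail, Finset.mul_sum]
    have : ∑ i ∈ Icc (a+1) n, (n.choose i : ℝ) * p ^ (i+1) * (1 - p) ^ (n - i)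
        = ∑ i ∈ Icc (a+1) n, p * ((n.choose i : ℝ) * p ^ i * (1 - p) ^ (n - i)) := by
      apply Finset.sum_congr rfl
      intro i hi
      rw [pow_succ]
      ring
    rw [this]
    ring
  rw [hsplit, h1, h2]
  have hsub : n + 1 - (a + 1) = n - a := by omega
  have hsub2 : a + 1 - 1 = a := by omega
  rw [hsub, hsub2]
  ring

lemma binTail_hasDerivAt (m N : ℕ) (hmN : m ≤ N) (p : ℝ) :
    HasDerivAt (fun t => binTail m N t)
      ((m : ℝ) * (N.choose m : ℝ) * p ^ (m-1) * (1-p) ^ (N - m)) p := by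
  set a : ℕ → ℝ := fun k => (N.choose k : ℝ) * k * p ^ (k-1) * (1-p) ^ (N-k) with ha
  have hterm : ∀ k ∈ Icc m N,
      HasDerivAt (fun t : ℝ => (N.choose k : ℝ) * t ^ k * (1 - t) ^ (N - k))
        (a k - a (k+1)) p := by
    intro k hk
    have h1 : HasDerivAt (fun t : ℝ => (N.choose k : ℝ) * t ^ k)
        ((N.choose k : ℝ) * ((k:ℝ) * p ^ (k-1))) p :=
      (hasDerivAt_pow k p).const_mul _
    have h2 : HasDerivAt (fun t : ℝ => (1 - t) ^ (N - k))
        (((N - k : ℕ) : ℝ) * (1 - p) ^ (N - k - 1) * (-1)) p :=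
      (hasDerivAt_pow (N - k) (1 - p)).comp p ((hasDerivAt_id p).const_sub 1)
    have h := h1.fun_mul h2
    refine h.congr_deriv ?_
    have hc : ((N.choose (k+1) * (k+1) : ℕ) : ℝ) = ((N.choose k * (N - k) : ℕ) : ℝ) := by
      exact_mod_cast congrArg (Nat.cast (R := ℝ)) (Nat.choose_succ_right_eq N k)
    push_cast at hc
    simp only [ha]
    have hsub : N - (k+1) = N - k - 1 := by omega
    have hsub2 : k + 1 - 1 = k := by omega
    rw [hsub, hsub2]
    push_cast
    linear_combination (p ^ k * (1 - p) ^ (N - k - 1)) * hc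
  have hsum := HasDerivAt.fun_sum hterm
  have htel : ∑ k ∈ Icc m N, (a k - a (k+1)) = a m - a (N+1) := by
    rw [← Finset.Ico_add_one_right_eq_Icc, Finset.sum_Ico_eq_sum_range]
    have := Finset.sum_range_sub' (fun i => a (m + i)) (N + 1 - m)
    simp only [← Nat.add_assoc] at this
    rw [this]
    congr 2
    omega
  have haN : a (N+1) = 0 := by
    simp only [ha, Nat.choose_succ_self, Nat.cast_zero, zero_mul]
  have ham : a m = (m : ℝ) * (N.choose m : ℝ) * p ^ (m-1) * (1-p) ^ (N - m) := by
    simp only [ha]; ring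
  unfold binTail
  refine hsum.congr_deriv ?_
  rw [htel, haN, ham]
  ring

lemma phi_hasDerivAt (a b : ℕ) (x : ℝ) :
    HasDerivAt (fun y : ℝ => y ^ a * (1 - y) ^ b)
      ((a : ℝ) * x ^ (a-1) * (1-x) ^ b - (b : ℝ) * x ^ a * (1-x) ^ (b-1)) x := by
  have h1 : HasDerivAt (fun y : ℝ => y ^ a) ((a:ℝ) * x ^ (a-1)) x := hasDerivAt_pow a x
  have h2 : HasDerivAt (fun y : ℝ => (1 - y) ^ b)
      ((b : ℝ) * (1 - x) ^ (b - 1) * (-1)) x :=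
    (hasDerivAt_pow b (1 - x)).comp x ((hasDerivAt_id x).const_sub 1)
  have h := h1.fun_mul h2
  refine h.congr_deriv ?_
  ring

lemma phi_lt (a b : ℕ) (ha : 1 ≤ a) (hb : 1 ≤ b) {t q : ℝ} (ht : 0 < t) (htq : t < q)
    (hq : q ≤ (a : ℝ) / ((a : ℝ) + (b : ℝ))) :
    t ^ a * (1 - t) ^ b < q ^ a * (1 - q) ^ b := by
  have hab : (0:ℝ) < (a:ℝ) + (b:ℝ) := by positivity
  have hbound : (a : ℝ) / ((a : ℝ) + (b : ℝ)) < 1 := by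
    rw [div_lt_one hab]
    have : (0:ℝ) < (b:ℝ) := by exact_mod_cast hb
    linarith
  have hmono : StrictMonoOn (fun y : ℝ => y ^ a * (1 - y) ^ b)
      (Set.Icc 0 ((a : ℝ) / ((a : ℝ) + (b : ℝ)))) := by
    apply strictMonoOn_of_deriv_pos (convex_Icc _ _)
    · exact (Continuous.continuousOn (by continuity))
    · intro x hx
      rw [interior_Icc] at hx
      obtain ⟨hx0, hx1⟩ := hx
      rw [(phi_hasDerivAt a b x).deriv]
      have h1x : 0 < 1 - x := by linarith
      have hxa : 0 < x ^ (a-1) := pow_pos hx0 _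
      have hxb : 0 < (1-x) ^ (b-1) := pow_pos h1x _
      have hlin : 0 < (a:ℝ) - ((a:ℝ) + (b:ℝ)) * x := by
        have := (lt_div_iff₀ hab).mp hx1
        linarith
      have hfac : (a : ℝ) * x ^ (a-1) * (1-x) ^ b - (b : ℝ) * x ^ a * (1-x) ^ (b-1)
          = x ^ (a-1) * (1-x) ^ (b-1) * ((a:ℝ) - ((a:ℝ) + (b:ℝ)) * x) := by
        have hxa' : x ^ a = x ^ (a-1) * x := by
          conv_lhs => rw [show a = (a-1)+1 by omega]
          rw [pow_succ]
        have hxb' : (1-x) ^ b = (1-x) ^ (b-1) * (1-x) := by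
          conv_lhs => rw [show b = (b-1)+1 by omega]
          rw [pow_succ]
        rw [hxa', hxb']
        ring
      rw [hfac]
      positivity
  exact hmono (Set.mem_Icc.mpr ⟨le_of_lt ht, le_trans (le_of_lt htq) hq⟩)
    (Set.mem_Icc.mpr ⟨by linarith, hq⟩) htq


lemma step_lt (m n : ℕ) (hm : 2 ≤ m) (hn : m ≤ n) :
    binTail m n (((m:ℝ)-1)/n) < binTail m (n+1) (((m:ℝ)-1)/(n+1)) := by
  have hn0 : (0:ℝ) < (n:ℝ) := by
    have : 0 < n := by omega
    exact_mod_cast this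
  have hn1 : (0:ℝ) < (n:ℝ) + 1 := by linarith
  set c : ℝ := (m:ℝ) - 1 with hc
  have hc0 : 0 < c := by
    have : (2:ℝ) ≤ (m:ℝ) := by exact_mod_cast hm
    simp only [hc]; linarith
  set q : ℝ := c / n with hq
  set q' : ℝ := c / (n+1) with hq'
  have hq'q : q' < q := by
    rw [hq, hq']
    apply div_lt_div_of_pos_left hc0 hn0
    linarith
  have hq'0 : 0 < q' := by positivity
  have hqlt1 : q < 1 := by
    rw [hq, div_lt_one hn0]
    have : (m:ℝ) ≤ (n:ℝ) := by exact_mod_cast hn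
    simp only [hc]; linarith
  set C' : ℝ := ((n+1).choose m : ℝ) with hC'
  have hC'0 : 0 < C' := by
    rw [hC']
    exact_mod_cast Nat.choose_pos (by omega)
  set M : ℝ := (m:ℝ) * C' * q ^ (m-1) * (1-q) ^ (n+1-m) with hM
  set G : ℝ → ℝ := fun t => M * t - binTail m (n+1) t with hG
  have hGd : ∀ t : ℝ, HasDerivAt G
      (M - (m:ℝ) * C' * t ^ (m-1) * (1-t) ^ (n+1-m)) t := by
    intro t
    have h1 : HasDerivAt (fun t : ℝ => M * t) M t := by
      simpa using (hasDerivAt_id t).const_mul M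
    exact h1.sub (binTail_hasDerivAt m (n+1) (by omega) t)
  have hmono : StrictMonoOn G (Set.Icc q' q) := by
    apply strictMonoOn_of_deriv_pos (convex_Icc _ _)
    · exact fun x _ => ((hGd x).continuousAt).continuousWithinAt
    · intro x hx
      rw [interior_Icc] at hx
      obtain ⟨hx1, hx2⟩ := hx
      rw [(hGd x).deriv]
      have hphi : x ^ (m-1) * (1-x) ^ (n+1-m) < q ^ (m-1) * (1-q) ^ (n+1-m) := by
        apply phi_lt (m-1) (n+1-m) (by omega) (by omega) (by linarith) hx2
        have hcast : ((m-1 : ℕ) : ℝ) = c := by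
          rw [hc]; push_cast [Nat.cast_sub (by omega : 1 ≤ m)]; ring
        have hcast2 : ((m-1 : ℕ) : ℝ) + ((n+1-m : ℕ) : ℝ) = (n:ℝ) := by
          push_cast [Nat.cast_sub (by omega : 1 ≤ m), Nat.cast_sub (by omega : m ≤ n+1)]
          ring
        rw [hcast2, hcast]
      have hmC : 0 < (m:ℝ) * C' := by positivity
      rw [hM]
      nlinarith [hphi, hmC]
  have hGlt : G q' < G q :=
    hmono (Set.mem_Icc.mpr ⟨le_refl _, le_of_lt hq'q⟩)
      (Set.mem_Icc.mpr ⟨le_of_lt hq'q, le_refl _⟩) hq'q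
  have hpascal := binTail_pascal m n (by omega) hn q
  have hMC : (m:ℝ) * C' = ((n:ℝ)+1) * (n.choose (m-1) : ℝ) := by
    have h := Nat.add_one_mul_choose_eq n (m-1)
    have hm1 : m - 1 + 1 = m := by omega
    rw [hm1] at h
    have hcastid : ((n:ℝ)+1) * (n.choose (m-1) : ℝ) = (((n+1).choose m : ℕ) : ℝ) * (m:ℝ) := by
      exact_mod_cast congrArg (Nat.cast (R := ℝ)) h
    rw [hC']
    linear_combination -hcastid
  have hqq' : q - q' = c / ((n:ℝ) * ((n:ℝ)+1)) := by
    rw [hq, hq']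
    field_simp
    ring
  have hqm : q ^ m = q ^ (m-1) * (c / (n:ℝ)) := by
    conv_lhs => rw [show m = (m-1)+1 by omega]
    rw [pow_succ, hq]
  have hkey : M * (q - q') = (n.choose (m-1) : ℝ) * q ^ m * (1-q) ^ (n+1-m) := by
    rw [hqq', hqm, hM, hMC]
    field_simp
  have hGlt' : M * q' - binTail m (n+1) q' < M * q - binTail m (n+1) q := hGlt
  linarith [hpascal, hkey, hGlt']

lemma binTail_self (m : ℕ) (p : ℝ) : binTail m m p = p ^ m := by
  simp [binTail]

lemma binTail_chain (m n : ℕ) (hm : 2 ≤ m) (hn : m ≤ n) :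
    binTail m m (((m:ℝ)-1)/m) ≤ binTail m n (((m:ℝ)-1)/n)
      ∧ (m < n → binTail m m (((m:ℝ)-1)/m) < binTail m n (((m:ℝ)-1)/n)) := by
  induction n, hn using Nat.le_induction with
  | base => exact ⟨le_rfl, fun h => absurd h (lt_irrefl m)⟩
  | succ n hn ih =>
    have hstep := step_lt m n hm hn
    have hcast : ((n+1 : ℕ) : ℝ) = (n:ℝ) + 1 := by push_cast; ring
    rw [hcast]
    exact ⟨le_trans ih.1 hstep.le, fun _ => lt_of_le_of_lt ih.1 hstep⟩

/-- For integers `m ≥ 2` and `n ≥ m`, `P(X_{n,(m-1)/n} ≥ m) ≥ ((m-1)/m)^m`,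
with strict inequality unless `n = m`. -/
theorem binomial_tail_ge_of_ge
    (m n : ℕ) (hm : 2 ≤ m) (hn : m ≤ n) :
    ((((m : ℝ) - 1) / m) ^ m
      ≤ ∑ k ∈ Finset.Icc m n,
          (n.choose k : ℝ) * (((m : ℝ) - 1) / n) ^ k * (1 - ((m : ℝ) - 1) / n) ^ (n - k)) ∧
    (n ≠ m →
      (((m : ℝ) - 1) / m) ^ m
        < ∑ k ∈ Finset.Icc m n,
            (n.choose k : ℝ) * (((m : ℝ) - 1) / n) ^ k * (1 - ((m : ℝ) - 1) / n) ^ (n - k)) := by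
  have h := binTail_chain m n hm hn
  have hself : binTail m m (((m:ℝ)-1)/m) = (((m:ℝ)-1)/m) ^ m := binTail_self m _
  rw [hself] at h
  constructor
  · exact h.1
  · intro hne
    exact h.2 (by omega)
end

section
/- Let X be a binomial random variable with parameters n and p, where n ≥ 3 is an integer and 1 ≤ n p < 2. Then P(X > n p) = 1 − (1−p)^n − n (1−p)^{n−1} p > 1/4. -/
lemma c2' (j : ℕ) : 2 * Nat.choose (j+3) 2 = (j+3)*(j+2) := by
  induction j with
  | zero => decide
  | succ k ih =>
    have h : Nat.choose (k+4) 2 = Nat.choose (k+3) 1 + Nat.choose (k+3) 2 :=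
      Nat.choose_succ_succ' (k+3) 1
    rw [show k+1+3 = k+4 from rfl, h, Nat.choose_one_right]
    nlinarith [ih]

lemma c3' (j : ℕ) : 6 * Nat.choose (j+3) 3 = (j+3)*(j+2)*(j+1) := by
  induction j with
  | zero => decide
  | succ k ih =>
    have h : Nat.choose (k+4) 3 = Nat.choose (k+3) 2 + Nat.choose (k+3) 3 :=
      Nat.choose_succ_succ' (k+3) 2
    have h2 := c2' k
    rw [show k+1+3 = k+4 from rfl, h]
    nlinarith [h2, ih]

lemma nat_key (m : ℕ) (hm : 2 ≤ m) : 4*(2*m+1)*m^m < 3*(m+1)^(m+1) := by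
  rcases eq_or_lt_of_le hm with h2 | h3
  · subst h2; decide
  · obtain ⟨j, rfl⟩ : ∃ j, m = j + 3 := ⟨m - 3, by omega⟩
    clear hm h3
    have hC2 := c2' j
    have hC3 := c3' j
    have hexp : (j+3+1)^(j+3) = ∑ k ∈ Finset.range (j+3+1), (j+3)^k * Nat.choose (j+3) k := by
      rw [add_pow]
      simp
    have hsub : ({j, j+1, j+2, j+3} : Finset ℕ) ⊆ Finset.range (j+3+1) := by
      intro x hx
      simp only [Finset.mem_insert, Finset.mem_singleton] at hx
      simp only [Finset.mem_range]
      omega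
    have hge : ∑ k ∈ ({j, j+1, j+2, j+3} : Finset ℕ), (j+3)^k * Nat.choose (j+3) k
        ≤ (j+3+1)^(j+3) := by
      rw [hexp]
      exact Finset.sum_le_sum_of_subset hsub
    have hsum : ∑ k ∈ ({j, j+1, j+2, j+3} : Finset ℕ), (j+3)^k * Nat.choose (j+3) k
        = (j+3)^j * Nat.choose (j+3) 3 + (j+3)^(j+1) * Nat.choose (j+3) 2
          + (j+3)^(j+2) * (j+3) + (j+3)^(j+3) := by
      rw [Finset.sum_insert (by simp only [Finset.mem_insert, Finset.mem_singleton]; omega),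
        Finset.sum_insert (by simp only [Finset.mem_insert, Finset.mem_singleton]; omega),
        Finset.sum_insert (by simp only [Finset.mem_singleton]; omega), Finset.sum_singleton]
      have e1 : Nat.choose (j+3) j = Nat.choose (j+3) 3 := by
        rw [← Nat.choose_symm (by omega : j ≤ j+3)]; congr 1; omega
      have e2 : Nat.choose (j+3) (j+1) = Nat.choose (j+3) 2 := by
        rw [← Nat.choose_symm (by omega : j+1 ≤ j+3)]; congr 1; omega
      have e3 : Nat.choose (j+3) (j+2) = Nat.choose (j+3) 1 := by
        rw [← Nat.choose_symm (by omega : j+2 ≤ j+3)]; congr 1; omega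
      rw [e1, e2, e3, Nat.choose_one_right, Nat.choose_self]
      ring
    have hXpos : 0 < (j+3)^j := pow_pos (by omega) j
    have hpow1 : (j+3)^(j+1) = (j+3)^j * (j+3) := by rw [← pow_succ]
    have hpow2 : (j+3)^(j+2) = (j+3)^j * (j+3)^2 := by rw [← pow_add]
    have hpow3 : (j+3)^(j+3) = (j+3)^j * (j+3)^3 := by rw [← pow_add]
    -- key polynomial inequality
    have key1 : 4*(2*(j+3)+1)*((j+3)^3) <
        3*(j+4) * (Nat.choose (j+3) 3 + (j+3) * Nat.choose (j+3) 2 + 2*(j+3)^3) := by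
      have h6 : 6*(3*(j+4) * (Nat.choose (j+3) 3 + (j+3) * Nat.choose (j+3) 2 + 2*(j+3)^3))
          = 3*(j+4)*(6 * Nat.choose (j+3) 3) + 9*(j+4)*(j+3)*(2 * Nat.choose (j+3) 2)
            + 36*(j+4)*(j+3)^3 := by ring
      rw [hC2, hC3] at h6
      have hlt : 6*(4*(2*(j+3)+1)*((j+3)^3)) <
          6*(3*(j+4) * (Nat.choose (j+3) 3 + (j+3) * Nat.choose (j+3) 2 + 2*(j+3)^3)) := by
        rw [h6]; nlinarith [sq_nonneg j]
      omega
    calc 4*(2*(j+3)+1)*(j+3)^(j+3)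
        = (4*(2*(j+3)+1)*(j+3)^3) * (j+3)^j := by rw [hpow3]; ring
      _ < (3*(j+4) * (Nat.choose (j+3) 3 + (j+3) * Nat.choose (j+3) 2 + 2*(j+3)^3)) * (j+3)^j :=
          Nat.mul_lt_mul_of_lt_of_le key1 (le_refl _) hXpos
      _ = 3*(j+4) * ((j+3)^j * Nat.choose (j+3) 3 + (j+3)^(j+1) * Nat.choose (j+3) 2
            + (j+3)^(j+2) * (j+3) + (j+3)^(j+3)) := by rw [hpow1, hpow2, hpow3]; ring
      _ ≤ 3*(j+4) * ((j+3+1)^(j+3)) := by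
          rw [hsum] at hge
          exact Nat.mul_le_mul_left _ hge
      _ = 3*(j+3+1)^(j+3+1) := by ring



lemma mono_g (n : ℕ) (hn : 3 ≤ n) :
    MonotoneOn (fun x : ℝ => (n:ℝ) * x^(n-1) - ((n:ℝ)-1) * x^n) (Set.Icc 0 1) := by
  apply monotoneOn_of_deriv_nonneg (convex_Icc 0 1)
  · exact (Continuous.continuousOn (by continuity))
  · apply Differentiable.differentiableOn
    exact ((differentiable_pow (n-1)).const_mul _).sub ((differentiable_pow n).const_mul _)
  · intro x hx
    rw [interior_Icc, Set.mem_Ioo] at hx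
    have hd : HasDerivAt (fun x : ℝ => (n:ℝ) * x^(n-1) - ((n:ℝ)-1) * x^n)
        ((n:ℝ) * ((↑(n-1)) * x^(n-1-1)) - ((n:ℝ)-1) * ((n:ℝ) * x^(n-1))) x :=
      ((hasDerivAt_pow (n-1) x).const_mul ((n:ℝ))).sub
        ((hasDerivAt_pow n x).const_mul (((n:ℝ)-1)))
    rw [hd.deriv]
    have hc : ((n-1 : ℕ) : ℝ) = (n:ℝ) - 1 := by
      rw [Nat.cast_sub (by omega)]; norm_num
    have he : n - 1 - 1 = n - 2 := by omega
    have he2 : x^(n-1) = x^(n-2) * x := by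
      rw [← pow_succ]; congr 1; omega
    rw [hc, he, he2]
    have hxp : (0:ℝ) ≤ x^(n-2) := pow_nonneg hx.1.le _
    have hn1 : (1:ℝ) ≤ (n:ℝ) - 1 := by
      have : (3:ℝ) ≤ (n:ℝ) := by exact_mod_cast hn
      linarith
    have key : (n:ℝ) * (((n:ℝ)-1) * x^(n-2)) - ((n:ℝ)-1) * ((n:ℝ) * (x^(n-2)*x))
        = ((n:ℝ) * ((n:ℝ)-1) * x^(n-2)) * (1-x) := by ring
    rw [key]
    apply mul_nonneg
    · apply mul_nonneg (by nlinarith) hxp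
    · linarith [hx.2]

lemma real_bound (n : ℕ) (hn : 3 ≤ n) (p : ℝ) (hp0 : 0 ≤ p) (hp1 : p ≤ 1)
    (h1 : 1 ≤ (n:ℝ) * p) :
    (1-p)^n + n * (1-p)^(n-1) * p < 3/4 := by
  have hn3 : (3:ℝ) ≤ (n:ℝ) := by exact_mod_cast hn
  have hn0 : (0:ℝ) < n := by linarith
  have hpn : 1/(n:ℝ) ≤ p := by
    rw [div_le_iff₀ hn0]; linarith [mul_comm (n:ℝ) p]
  set q : ℝ := 1 - p with hqdef
  have hq0 : 0 ≤ q := by rw [hqdef]; linarith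
  have hqQ : q ≤ 1 - 1/(n:ℝ) := by rw [hqdef]; linarith
  have h1n : 1/(n:ℝ) ≤ 1 := by rw [div_le_one hn0]; linarith
  have hQ0 : 0 ≤ 1 - 1/(n:ℝ) := by linarith
  have hQ1 : 1 - 1/(n:ℝ) ≤ 1 := by
    have : 0 < 1/(n:ℝ) := by positivity
    linarith
  have hgq : q^n + (n:ℝ) * q^(n-1) * p = (n:ℝ) * q^(n-1) - ((n:ℝ)-1) * q^n := by
    have hp : p = 1 - q := by rw [hqdef]; ring
    have hqn : q^n = q^(n-1) * q := by rw [← pow_succ]; congr 1; omega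
    rw [hp, hqn]; ring
  have hmono := mono_g n hn (Set.mem_Icc.mpr ⟨hq0, le_trans hqQ hQ1⟩)
    (Set.mem_Icc.mpr ⟨hQ0, hQ1⟩) hqQ
  simp only at hmono
  -- endpoint bound
  have hQa : 1 - 1/(n:ℝ) = ((n:ℝ)-1) / n := by field_simp
  have hnn : (n:ℝ)^n = (n:ℝ)^(n-1) * n := by rw [← pow_succ]; congr 1; omega
  have han : ((n:ℝ)-1)^n = ((n:ℝ)-1)^(n-1) * ((n:ℝ)-1) := by
    rw [← pow_succ]; congr 1; omega
  have hne : (n:ℝ) ≠ 0 := ne_of_gt hn0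
  have hkey : (n:ℝ) * (((n:ℝ)-1)/n)^(n-1) - ((n:ℝ)-1) * (((n:ℝ)-1)/n)^n
      = ((n:ℝ)-1)^(n-1) * (2*(n:ℝ)-1) / (n:ℝ)^n := by
    rw [div_pow, div_pow, hnn, han]
    field_simp
    ring
  have hNat := nat_key (n-1) (by omega)
  have hm1 : n - 1 + 1 = n := by omega
  rw [hm1] at hNat
  have hNc : (4:ℝ) * (2*((n:ℝ)-1)+1) * ((n:ℝ)-1)^(n-1) < 3 * (n:ℝ)^n := by
    have hcast : ((4*(2*(n-1)+1)*(n-1)^(n-1) : ℕ) : ℝ) < ((3*n^n : ℕ) : ℝ) := by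
      exact_mod_cast hNat
    push_cast [Nat.cast_sub (show 1 ≤ n by omega)] at hcast
    convert hcast using 2
  have hend : (n:ℝ) * (1 - 1/(n:ℝ))^(n-1) - ((n:ℝ)-1) * (1 - 1/(n:ℝ))^n < 3/4 := by
    rw [hQa, hkey, div_lt_div_iff₀ (by positivity) (by norm_num)]
    have heq : ((n:ℝ)-1)^(n-1) * (2*(n:ℝ)-1) * 4
        = 4 * (2*((n:ℝ)-1)+1) * ((n:ℝ)-1)^(n-1) := by ring
    rw [heq]
    linarith [hNc]
  calc q^n + (n:ℝ) * q^(n-1) * p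
      = (n:ℝ) * q^(n-1) - ((n:ℝ)-1) * q^n := hgq
    _ ≤ (n:ℝ) * (1 - 1/(n:ℝ))^(n-1) - ((n:ℝ)-1) * (1 - 1/(n:ℝ))^n := hmono
    _ < 3/4 := hend


/-- If `n ≥ 3` and `1 ≤ n p < 2`, then
`P(X > n p) = 1 - (1-p)^n - n (1-p)^{n-1} p > 1/4`. -/
theorem binomial_prob_gt_mean_case_np_in_one_two
    (n : ℕ) (hn : 3 ≤ n) (p : ℝ) (hp0 : 0 ≤ p) (hp1 : p ≤ 1)
    (h1 : 1 ≤ (n : ℝ) * p) (h2 : (n : ℝ) * p < 2) :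
    (∑ k ∈ (Finset.range (n + 1)).filter (fun k : ℕ => (n : ℝ) * p < (k : ℝ)),
        (n.choose k : ℝ) * p ^ k * (1 - p) ^ (n - k))
      = 1 - (1 - p) ^ n - n * (1 - p) ^ (n - 1) * p ∧
    (1 : ℝ) / 4 < 1 - (1 - p) ^ n - n * (1 - p) ^ (n - 1) * p := by
  have hfil : (Finset.range (n + 1)).filter (fun k : ℕ => (n : ℝ) * p < (k : ℝ))
      = Finset.Ico 2 (n + 1) := by
    ext k
    simp only [Finset.mem_filter, Finset.mem_range, Finset.mem_Ico]
    constructor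
    · rintro ⟨hk, hlt⟩
      refine ⟨?_, hk⟩
      by_contra hc
      push_neg at hc
      have : (k : ℝ) ≤ 1 := by
        have : k ≤ 1 := by omega
        exact_mod_cast this
      linarith
    · rintro ⟨h2k, hk⟩
      refine ⟨hk, ?_⟩
      have : (2 : ℝ) ≤ (k : ℝ) := by exact_mod_cast h2k
      linarith
  have htot : ∑ k ∈ Finset.range (n + 1), (n.choose k : ℝ) * p ^ k * (1 - p) ^ (n - k)
      = 1 := by
    calc ∑ k ∈ Finset.range (n + 1), (n.choose k : ℝ) * p ^ k * (1 - p) ^ (n - k)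
        = ∑ k ∈ Finset.range (n + 1), p ^ k * (1 - p) ^ (n - k) * (n.choose k : ℝ) :=
          Finset.sum_congr rfl (fun k _ => by ring)
      _ = (p + (1 - p)) ^ n := (add_pow p (1 - p) n).symm
      _ = 1 := by norm_num
  have hsplit : ∑ k ∈ Finset.range (n + 1), (n.choose k : ℝ) * p ^ k * (1 - p) ^ (n - k)
      = (n.choose 0 : ℝ) * p ^ 0 * (1 - p) ^ (n - 0)
        + ((n.choose 1 : ℝ) * p ^ 1 * (1 - p) ^ (n - 1)
          + ∑ k ∈ Finset.Ico 2 (n + 1), (n.choose k : ℝ) * p ^ k * (1 - p) ^ (n - k)) := by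
    rw [Finset.range_eq_Ico, Finset.sum_eq_sum_Ico_succ_bot (by omega : 0 < n + 1),
      Finset.sum_eq_sum_Ico_succ_bot (by omega : 1 < n + 1)]
  have hf0 : (n.choose 0 : ℝ) * p ^ 0 * (1 - p) ^ (n - 0) = (1 - p) ^ n := by
    simp
  have hf1 : (n.choose 1 : ℝ) * p ^ 1 * (1 - p) ^ (n - 1) = n * (1 - p) ^ (n - 1) * p := by
    simp [Nat.choose_one_right]; ring
  have heq : (∑ k ∈ (Finset.range (n + 1)).filter (fun k : ℕ => (n : ℝ) * p < (k : ℝ)),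
      (n.choose k : ℝ) * p ^ k * (1 - p) ^ (n - k))
      = 1 - (1 - p) ^ n - n * (1 - p) ^ (n - 1) * p := by
    rw [hfil]
    rw [hsplit, hf0, hf1] at htot
    linarith
  refine ⟨heq, ?_⟩
  have hb := real_bound n hn p hp0 hp1 h1
  linarith
end

section
/- The function g(x) := (2 − 1/x)(1 − 1/x)^{x−1} is strictly decreasing in the real variable x on [3, ∞), with limit 2/e as x → ∞; moreover, ln g(x) is convex on [3, ∞), its second derivative being 1/((2x−1)^2 (x−1) x) > 0. In particular, g(x) ≤ g(3) = 20/27 for all x ≥ 3, so that 1 − g(x) ≥ 7/27 > 1/4 for all x ≥ 3. -/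
/-- The function `g(x) = (2 - 1/x)(1 - 1/x)^{x-1}` (with real exponent, i.e.
`(1-1/x)^{x-1} = exp((x-1) ln(1-1/x))`). -/
noncomputable def gFun (x : ℝ) : ℝ := (2 - 1 / x) * Real.exp ((x - 1) * Real.log (1 - 1 / x))

section gFunAux
open Real Filter Set

noncomputable def hFun (x : ℝ) : ℝ := Real.log (2 - 1 / x) + (x - 1) * Real.log (1 - 1 / x)
noncomputable def h1 (x : ℝ) : ℝ := 2 / (2 * x - 1) + Real.log (1 - 1 / x)
noncomputable def h2 (x : ℝ) : ℝ := 1 / ((2 * x - 1) ^ 2 * (x - 1) * x)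

lemma facts {x : ℝ} (hx : 1 < x) :
    x ≠ 0 ∧ 0 < 1 - 1/x ∧ 0 < 2 - 1/x ∧ 2*x - 1 ≠ 0 ∧ x - 1 ≠ 0 := by
  have hx0 : 0 < x := by linarith
  have h1x : 1/x < 1 := by rw [div_lt_one hx0]; linarith
  refine ⟨hx0.ne', by linarith, by linarith, by nlinarith, by nlinarith⟩

lemma gFun_eq_exp {x : ℝ} (hx : 1 < x) : gFun x = Real.exp (hFun x) := by
  obtain ⟨hx0, h1x, h2x, -, -⟩ := facts hx
  rw [hFun, Real.exp_add, Real.exp_log h2x, gFun]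

lemma gFun_pos {x : ℝ} (hx : 1 < x) : 0 < gFun x := by
  rw [gFun_eq_exp hx]; exact Real.exp_pos _

lemma log_gFun_eq {x : ℝ} (hx : 1 < x) : Real.log (gFun x) = hFun x := by
  rw [gFun_eq_exp hx, Real.log_exp]

lemma hasDerivAt_hFun {x : ℝ} (hx : 1 < x) : HasDerivAt hFun (h1 x) x := by
  obtain ⟨hx0, h1x, h2x, h2x1, hx1⟩ := facts hx
  have hinv : HasDerivAt (fun y : ℝ => 1 / y) (-(1/x^2)) x := by
    simpa using (hasDerivAt_inv hx0)
  have d1 : HasDerivAt (fun y : ℝ => 2 - 1/y) (1/x^2) x := by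
    exact ((hasDerivAt_const x (2:ℝ)).sub hinv).congr_deriv (by ring)
  have d2 : HasDerivAt (fun y : ℝ => 1 - 1/y) (1/x^2) x := by
    exact ((hasDerivAt_const x (1:ℝ)).sub hinv).congr_deriv (by ring)
  have dlog1 : HasDerivAt (fun y : ℝ => Real.log (2 - 1/y)) ((1/x^2) / (2 - 1/x)) x :=
    by simpa [Function.comp_def, div_eq_inv_mul] using (Real.hasDerivAt_log h2x.ne').comp x d1
  have dlog2 : HasDerivAt (fun y : ℝ => Real.log (1 - 1/y)) ((1/x^2) / (1 - 1/x)) x :=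
    by simpa [Function.comp_def, div_eq_inv_mul] using (Real.hasDerivAt_log h1x.ne').comp x d2
  have dmul : HasDerivAt (fun y : ℝ => (y - 1) * Real.log (1 - 1/y))
      (1 * Real.log (1 - 1/x) + (x - 1) * ((1/x^2) / (1 - 1/x))) x :=
    ((hasDerivAt_id x).sub_const 1).mul dlog2
  have := dlog1.add dmul
  refine this.congr_deriv ?_
  rw [h1]
  have hx2 : x^2 ≠ 0 := pow_ne_zero 2 hx0
  field_simp
  rw [show x * 2 - 1 = 2 * x - 1 by ring]
  have key : 1 + 1 / (2 * x - 1) = x * (2 / (2 * x - 1)) := by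
    rw [eq_comm, mul_div_assoc', div_eq_iff h2x1, add_mul, div_mul_cancel₀ _ h2x1]; ring
  rw [mul_add]; linarith [key]

lemma hasDerivAt_h1 {x : ℝ} (hx : 1 < x) : HasDerivAt h1 (h2 x) x := by
  obtain ⟨hx0, h1x, h2x, h2x1, hx1⟩ := facts hx
  have hinv : HasDerivAt (fun y : ℝ => 1 / y) (-(1/x^2)) x := by
    simpa using (hasDerivAt_inv hx0)
  have d2 : HasDerivAt (fun y : ℝ => 1 - 1/y) (1/x^2) x := by
    exact ((hasDerivAt_const x (1:ℝ)).sub hinv).congr_deriv (by ring)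
  have dlog2 : HasDerivAt (fun y : ℝ => Real.log (1 - 1/y)) ((1/x^2) / (1 - 1/x)) x :=
    by simpa [Function.comp_def, div_eq_inv_mul] using (Real.hasDerivAt_log h1x.ne').comp x d2
  have dden : HasDerivAt (fun y : ℝ => 2 * y - 1) 2 x := by
    simpa using ((hasDerivAt_id x).const_mul (2:ℝ)).sub_const 1
  have dfrac : HasDerivAt (fun y : ℝ => 2 / (2 * y - 1))
      ((0 * (2*x-1) - 2 * 2) / (2*x-1)^2) x :=
    (hasDerivAt_const x (2:ℝ)).div dden h2x1
  have := dfrac.add dlog2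
  refine this.congr_deriv ?_
  rw [h2]
  field_simp
  ring


lemma eventually_logg {x : ℝ} (hx : 1 < x) :
    (fun y => Real.log (gFun y)) =ᶠ[nhds x] hFun :=
  Filter.eventuallyEq_of_mem (isOpen_Ioi.mem_nhds hx) fun _ hy => log_gFun_eq hy

lemma deriv_logg {x : ℝ} (hx : 1 < x) :
    deriv (fun y => Real.log (gFun y)) x = h1 x := by
  rw [(eventually_logg hx).deriv_eq, (hasDerivAt_hFun hx).deriv]

lemma eventually_deriv_logg {x : ℝ} (hx : 1 < x) :
    deriv (fun y => Real.log (gFun y)) =ᶠ[nhds x] h1 :=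
  Filter.eventuallyEq_of_mem (isOpen_Ioi.mem_nhds hx) fun _ hy => deriv_logg hy

lemma deriv2_logg {x : ℝ} (hx : 1 < x) :
    deriv (deriv (fun y => Real.log (gFun y))) x = h2 x := by
  rw [(eventually_deriv_logg hx).deriv_eq, (hasDerivAt_h1 hx).deriv]

lemma h2_pos {x : ℝ} (hx : 1 < x) : 0 < h2 x := by
  rw [h2]
  apply div_pos one_pos
  have h1' : 0 < (2*x-1)^2 := by nlinarith
  have h2' : 0 < x - 1 := by linarith
  have h3' : 0 < x := by linarith
  positivity

lemma tendsto_two_div : Tendsto (fun x : ℝ => 2 / (2*x - 1)) atTop (nhds 0) := by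
  apply Tendsto.div_atTop (tendsto_const_nhds (x := (2:ℝ)))
  have : Tendsto (fun x : ℝ => 2 * x) atTop atTop :=
    Tendsto.const_mul_atTop two_pos tendsto_id
  exact tendsto_atTop_add_const_right _ (-1) this |>.congr (fun x => by ring)

lemma tendsto_one_sub : Tendsto (fun x : ℝ => 1 - 1/x) atTop (nhds 1) := by
  have : Tendsto (fun x : ℝ => 1/x) atTop (nhds 0) := by
    simpa [one_div] using tendsto_inv_atTop_zero
  simpa using tendsto_const_nhds.sub this

lemma tendsto_log_one_sub : Tendsto (fun x : ℝ => Real.log (1 - 1/x)) atTop (nhds 0) := by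
  have := ((Real.continuousAt_log one_ne_zero).tendsto.comp tendsto_one_sub)
  simpa [Function.comp_def] using this

lemma tendsto_h1 : Tendsto h1 atTop (nhds 0) := by
  unfold h1
  simpa using tendsto_two_div.add tendsto_log_one_sub

lemma h1_strictMono : StrictMonoOn h1 (Ici 2) := by
  apply strictMonoOn_of_deriv_pos (convex_Ici 2)
  · exact fun x hx => (hasDerivAt_h1 (by exact lt_of_lt_of_le one_lt_two hx)).continuousAt.continuousWithinAt
  · intro x hx
    rw [interior_Ici] at hx
    have h1x : (1:ℝ) < x := by linarith [mem_Ioi.1 hx]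
    rw [(hasDerivAt_h1 h1x).deriv]
    exact h2_pos h1x

lemma h1_nonpos {x : ℝ} (hx : 2 ≤ x) : h1 x ≤ 0 := by
  apply ge_of_tendsto tendsto_h1
  filter_upwards [eventually_ge_atTop x] with y hy
  rcases eq_or_lt_of_le hy with rfl | hlt
  · exact le_refl _
  · exact (h1_strictMono hx (hx.trans hy) hlt).le

lemma h1_neg {x : ℝ} (hx : 2 < x) : h1 x < 0 :=
  lt_of_lt_of_le (h1_strictMono hx.le (by linarith : (2:ℝ) ≤ x + 1) (lt_add_one x))
    (h1_nonpos (by linarith))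

lemma logg_strictAnti : StrictAntiOn (fun y => Real.log (gFun y)) (Ici 3) := by
  apply strictAntiOn_of_deriv_neg (convex_Ici 3)
  · intro x hx
    have h1x : (1:ℝ) < x := by have := mem_Ici.1 hx; linarith
    exact ((hasDerivAt_hFun h1x).continuousAt.congr (eventually_logg h1x).symm).continuousWithinAt
  · intro x hx
    rw [interior_Ici] at hx
    have h1x : (1:ℝ) < x := by have := mem_Ioi.1 hx; linarith
    rw [deriv_logg h1x]
    exact h1_neg (by linarith [mem_Ioi.1 hx])

lemma gFun_strictAnti : StrictAntiOn gFun (Ici 3) := by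
  intro a ha b hb hab
  have h1a : (1:ℝ) < a := by have := mem_Ici.1 ha; linarith
  have h1b : (1:ℝ) < b := by have := mem_Ici.1 hb; linarith
  have := logg_strictAnti ha hb hab
  simp only [log_gFun_eq h1a, log_gFun_eq h1b] at this
  rw [gFun_eq_exp h1a, gFun_eq_exp h1b]
  exact Real.exp_lt_exp.2 this

lemma logg_convex : ConvexOn ℝ (Ici 3) (fun x => Real.log (gFun x)) := by
  apply convexOn_of_deriv2_nonneg (convex_Ici 3)
  · intro x hx
    have h1x : (1:ℝ) < x := by have := mem_Ici.1 hx; linarith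
    exact ((hasDerivAt_hFun h1x).continuousAt.congr (eventually_logg h1x).symm).continuousWithinAt
  · intro x hx
    rw [interior_Ici] at hx
    have h1x : (1:ℝ) < x := by have := mem_Ioi.1 hx; linarith
    exact (((eventually_logg h1x).differentiableAt_iff).2
      (hasDerivAt_hFun h1x).differentiableAt).differentiableWithinAt
  · intro x hx
    rw [interior_Ici] at hx
    have h1x : (1:ℝ) < x := by have := mem_Ioi.1 hx; linarith
    exact (((eventually_deriv_logg h1x).differentiableAt_iff).2
      (hasDerivAt_h1 h1x).differentiableAt).differentiableWithinAt
  · intro x hx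
    rw [interior_Ici] at hx
    have h1x : (1:ℝ) < x := by have := mem_Ioi.1 hx; linarith
    show 0 ≤ deriv (deriv fun y => Real.log (gFun y)) x
    rw [deriv2_logg h1x]
    exact (h2_pos h1x).le

lemma tendsto_gFun : Tendsto gFun atTop (nhds (2 / Real.exp 1)) := by
  have tg1 : Tendsto (fun x : ℝ => 2 - 1/x) atTop (nhds 2) := by
    have : Tendsto (fun x : ℝ => 1/x) atTop (nhds 0) := by
      simpa [one_div] using tendsto_inv_atTop_zero
    simpa using tendsto_const_nhds.sub this
  have A := Real.tendsto_mul_log_one_add_div_atTop (-1)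
  simp only [neg_div, ← sub_eq_add_neg] at A
  have tg2 : Tendsto (fun x : ℝ => (x - 1) * Real.log (1 - 1/x)) atTop (nhds (-1)) := by
    have := A.sub tendsto_log_one_sub
    simp only [sub_zero] at this
    exact this.congr fun x => by ring
  have texp : Tendsto (fun x : ℝ => Real.exp ((x - 1) * Real.log (1 - 1/x))) atTop
      (nhds (Real.exp (-1))) := (Real.continuous_exp.tendsto _).comp tg2
  have := tg1.mul texp
  rw [show (2:ℝ) * Real.exp (-1) = 2 / Real.exp 1 by
    rw [Real.exp_neg]; rw [div_eq_mul_inv]] at this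
  exact this

lemma gFun_three : gFun 3 = 20 / 27 := by
  rw [gFun]
  norm_num
  rw [show (2:ℝ) * Real.log (2/3) = Real.log ((2/3)^2) by rw [Real.log_pow]; norm_num]
  rw [Real.exp_log (by norm_num : (0:ℝ) < (2/3)^2)]
  norm_num

end gFunAux

/-- `g` is strictly decreasing on `[3, ∞)` with limit `2/e` at `∞`; `ln g` is convex on
`[3, ∞)` with second derivative `1/((2x-1)² (x-1) x) > 0`; in particular, for all `x ≥ 3`,
`g(x) ≤ g(3) = 20/27`, so `1 - g(x) ≥ 7/27 > 1/4`. -/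
theorem gFun_properties :
    StrictAntiOn gFun (Set.Ici 3) ∧
    Filter.Tendsto gFun Filter.atTop (nhds (2 / Real.exp 1)) ∧
    ConvexOn ℝ (Set.Ici 3) (fun x => Real.log (gFun x)) ∧
    (∀ x : ℝ, 3 ≤ x →
      deriv (deriv (fun y => Real.log (gFun y))) x
        = 1 / ((2 * x - 1) ^ 2 * (x - 1) * x) ∧
      0 < 1 / ((2 * x - 1) ^ 2 * (x - 1) * x)) ∧
    gFun 3 = 20 / 27 ∧
    (∀ x : ℝ, 3 ≤ x → gFun x ≤ 20 / 27) ∧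
    (∀ x : ℝ, 3 ≤ x → 7 / 27 ≤ 1 - gFun x) ∧
    (1 : ℝ) / 4 < 7 / 27 := by

  have hle : ∀ x : ℝ, 3 ≤ x → gFun x ≤ 20 / 27 := by
    intro x hx
    rcases eq_or_lt_of_le hx with rfl | hlt
    · exact gFun_three.le
    · exact (gFun_strictAnti (Set.mem_Ici.2 (le_refl 3)) (Set.mem_Ici.2 hx) hlt).le.trans gFun_three.le
  refine ⟨gFun_strictAnti, tendsto_gFun, logg_convex, ?_, gFun_three, hle, ?_, by norm_num⟩
  · intro x hx
    have h1x : (1:ℝ) < x := by linarith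
    refine ⟨by rw [deriv2_logg h1x]; rfl, ?_⟩
    have := h2_pos h1x
    rwa [h2] at this
  · intro x hx
    linarith [hle x hx]
end

section
/- Let X be a binomial random variable with parameters n and p, where n ≥ 3 is an integer and 1 < n(1−p) ≤ 2 (equivalently, n − 2 ≤ n p < n − 1). Then P(X > n p) = P(X ≥ n − 1) = p^n + n p^{n−1}(1−p) > 1/4. -/
theorem binom_aux (M : ℕ) : ∀ k : ℕ, M^(k+2) + 2*(k+2)*M^(k+1) + 2*(k+2)*(k+1)*M^k ≤ (M+2)^(k+2) := by
  intro k
  induction k with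
  | zero => ring_nf; nlinarith [sq_nonneg M]
  | succ k ih =>
    have h1 : (M+2)^(k+3) = (M+2) * (M+2)^(k+2) := by ring
    have h2 : (M+2) * (M^(k+2) + 2*(k+2)*M^(k+1) + 2*(k+2)*(k+1)*M^k) ≤ (M+2)*(M+2)^(k+2) :=
      Nat.mul_le_mul_left _ ih
    have h3 : (M+2) * (M^(k+2) + 2*(k+2)*M^(k+1) + 2*(k+2)*(k+1)*M^k)
        = M^(k+3) + 2*(k+3)*M^(k+2) + 2*(k+3)*(k+2)*M^(k+1) + 4*(k+2)*(k+1)*M^k := by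
      ring
    calc M^(k+3) + 2*(k+3)*M^(k+2) + 2*(k+3)*(k+2)*M^(k+1)
        ≤ M^(k+3) + 2*(k+3)*M^(k+2) + 2*(k+3)*(k+2)*M^(k+1) + 4*(k+2)*(k+1)*M^k :=
          Nat.le_add_right _ _
      _ = (M+2) * (M^(k+2) + 2*(k+2)*M^(k+1) + 2*(k+2)*(k+1)*M^k) := h3.symm
      _ ≤ (M+2)*(M+2)^(k+2) := h2
      _ = (M+2)^(k+3) := h1.symm

theorem main_nat : ∀ m : ℕ, (m+3)^(m+3) < 4*(3*m+7)*(m+1)^(m+2) := by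
  intro m
  induction m with
  | zero => norm_num
  | succ m ih =>
    -- goal: (m+4)^(m+4) < 4*(3*m+10)*(m+2)^(m+3)
    set M : ℕ := m^2 + 5*m + 4 with hM
    have hb := binom_aux M (m+1)
    -- coefficient inequality
    have hcoef : (3*m+7)*(m+4)*M^2
        ≤ (3*m+10)*(m+1)*(M^2 + 2*(m+3)*M + 2*(m+3)*(m+2)) := by
      have hid : (3*m+10)*(m+1)*(M^2 + 2*(m+3)*M + 2*(m+3)*(m+2)) = (3*m+7)*(m+4)*M^2 + 2*(m+3)*(m+1)*(m^2+6*m+12) := by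
        rw [hM]; ring
      rw [hid]; exact Nat.le_add_right _ _
    -- K' : (3m+10)(m+1)(M+2)^{m+3} ≥ (3m+7)(m+4)M^{m+3}
    have hK' : (3*m+7)*(m+4)*M^(m+3) ≤ (3*m+10)*(m+1)*(M+2)^(m+3) := by
      have e1 : M^(m+3) = M^(m+1) * M^2 := by ring
      have e2 : (3*m+10)*(m+1)*(M^(m+3) + 2*(m+3)*M^(m+2) + 2*(m+3)*(m+2)*M^(m+1))
          = ((3*m+10)*(m+1)*(M^2 + 2*(m+3)*M + 2*(m+3)*(m+2))) * M^(m+1) := by ring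
      calc (3*m+7)*(m+4)*M^(m+3) = ((3*m+7)*(m+4)*M^2) * M^(m+1) := by ring
        _ ≤ ((3*m+10)*(m+1)*(M^2 + 2*(m+3)*M + 2*(m+3)*(m+2))) * M^(m+1) :=
            Nat.mul_le_mul_right _ hcoef
        _ = (3*m+10)*(m+1)*(M^(m+3) + 2*(m+3)*M^(m+2) + 2*(m+3)*(m+2)*M^(m+1)) := e2.symm
        _ ≤ (3*m+10)*(m+1)*(M+2)^(m+3) := Nat.mul_le_mul_left _ hb
    -- rewrite powers: M^(m+3) = (m+1)^(m+3)*(m+4)^(m+3), (M+2)^(m+3) = (m+2)^(m+3)*(m+3)^(m+3)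
    have eM : M^(m+3) = (m+1)^(m+3) * (m+4)^(m+3) := by
      rw [← Nat.mul_pow]; congr 1; rw [hM]; ring
    have eM2 : (M+2)^(m+3) = (m+2)^(m+3) * (m+3)^(m+3) := by
      rw [← Nat.mul_pow]; congr 1; ring
    rw [eM, eM2] at hK'
    -- K (after cancelling factor m+1): (3m+7)*(m+4)^(m+4)*(m+1)^(m+2) ≤ (3m+10)*(m+2)^(m+3)*(m+3)^(m+3)
    have hK : (3*m+7)*((m+4)^(m+4)*(m+1)^(m+2)) ≤ (3*m+10)*((m+2)^(m+3)*(m+3)^(m+3)) := by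
      have := hK'
      have h' : ((3*m+7)*((m+4)^(m+4)*(m+1)^(m+2))) * (m+1)
          ≤ ((3*m+10)*((m+2)^(m+3)*(m+3)^(m+3))) * (m+1) := by
        calc ((3*m+7)*((m+4)^(m+4)*(m+1)^(m+2))) * (m+1)
            = (3*m+7)*(m+4)*((m+1)^(m+3) * (m+4)^(m+3)) := by ring
          _ ≤ (3*m+10)*(m+1)*((m+2)^(m+3) * (m+3)^(m+3)) := hK'
          _ = ((3*m+10)*((m+2)^(m+3)*(m+3)^(m+3))) * (m+1) := by ring
      exact Nat.le_of_mul_le_mul_right h' (by omega)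
    -- combine with ih
    have hpos : 0 < (3*m+7)*(m+1)^(m+2) := by positivity
    have hfin : ((m+4)^(m+4)) * ((3*m+7)*(m+1)^(m+2))
        < (4*(3*m+10)*(m+2)^(m+3)) * ((3*m+7)*(m+1)^(m+2)) := by
      calc (m+4)^(m+4) * ((3*m+7)*(m+1)^(m+2))
          = (3*m+7)*((m+4)^(m+4)*(m+1)^(m+2)) := by ring
        _ ≤ (3*m+10)*((m+2)^(m+3)*(m+3)^(m+3)) := hK
        _ = (m+3)^(m+3) * ((3*m+10)*(m+2)^(m+3)) := by ring
        _ < (4*(3*m+7)*(m+1)^(m+2)) * ((3*m+10)*(m+2)^(m+3)) := by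
            apply Nat.mul_lt_mul_right (by positivity) |>.mpr ih
        _ = (4*(3*m+10)*(m+2)^(m+3)) * ((3*m+7)*(m+1)^(m+2)) := by ring
    have := Nat.lt_of_mul_lt_mul_right hfin
    convert this using 2 <;> ring


-- Bernoulli-type: (k+1) a^k (p-a) ≤ p^(k+1) - a^(k+1) for 0 ≤ a ≤ p
theorem pow_sub_pow_ge (a p : ℝ) (ha : 0 ≤ a) (hap : a ≤ p) :
    ∀ k : ℕ, (k+1 : ℝ) * a^k * (p-a) ≤ p^(k+1) - a^(k+1) := by
  intro k
  induction k with
  | zero => simp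
  | succ k ih =>
    have hp : 0 ≤ p := le_trans ha hap
    have hpow : a^(k+1) ≤ p^(k+1) := pow_le_pow_left₀ ha hap _
    have hak : 0 ≤ a^k := pow_nonneg ha _
    have key : p * (p^(k+1) - a^(k+1)) ≥ a * ((k+1:ℝ) * a^k * (p-a)) := by
      calc p * (p^(k+1) - a^(k+1)) ≥ a * (p^(k+1) - a^(k+1)) := by
            apply mul_le_mul_of_nonneg_right hap (by linarith)
        _ ≥ a * ((k+1:ℝ) * a^k * (p-a)) := by
            apply mul_le_mul_of_nonneg_left ih ha
    have e : p^(k+2) - a^(k+2) = p * (p^(k+1) - a^(k+1)) + a^(k+1) * (p - a) := by ring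
    have h2 : a * ((k+1:ℝ) * a^k * (p-a)) = (k+1:ℝ) * a^(k+1) * (p-a) := by ring
    have h3 : ((k:ℝ)+1+1) * a^(k+1) * (p-a) = (k+1:ℝ)*a^(k+1)*(p-a) + a^(k+1)*(p-a) := by ring
    push_cast
    rw [e, h3]
    have : 0 ≤ a^(k+1) * (p-a) := mul_nonneg (pow_nonneg ha _) (by linarith)
    nlinarith [key, h2]

-- monotonicity of g(x) = (m+3) x^(m+2) - (m+2) x^(m+3) on [0,1]
theorem g_mono (m : ℕ) (a p : ℝ) (ha : 0 ≤ a) (hap : a ≤ p) (hp1 : p ≤ 1) :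
    (m+3 : ℝ) * a^(m+2) - (m+2 : ℝ) * a^(m+3) ≤ (m+3 : ℝ) * p^(m+2) - (m+2 : ℝ) * p^(m+3) := by
  have hp : 0 ≤ p := le_trans ha hap
  have ha1 : a ≤ 1 := le_trans hap hp1
  have h1 := pow_sub_pow_ge a p ha hap (m+1)
  -- (m+2) a^(m+1) (p-a) ≤ p^(m+2) - a^(m+2)
  have hpow2 : a^(m+2) ≤ p^(m+2) := pow_le_pow_left₀ ha hap _
  have hfac : a^(m+2) * (p - a) ≤ a^(m+1) * (p - a) := by
    apply mul_le_mul_of_nonneg_right _ (by linarith)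
    calc a^(m+2) = a^(m+1) * a := by ring
      _ ≤ a^(m+1) * 1 := by
          apply mul_le_mul_of_nonneg_left ha1 (pow_nonneg ha _)
      _ = a^(m+1) := by ring
  -- p^(m+3) - a^(m+3) ≤ p^(m+2) - a^(m+2) + a^(m+2)(p-a)
  have hsplit : p^(m+3) - a^(m+3) = p * (p^(m+2) - a^(m+2)) + a^(m+2) * (p - a) := by ring
  have hple : p * (p^(m+2) - a^(m+2)) ≤ p^(m+2) - a^(m+2) := by
    nlinarith [hpow2]
  push_cast at h1 ⊢
  nlinarith [h1, hfac, hsplit, hple]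


/-- If `n ≥ 3` and `1 < n(1-p) ≤ 2` (equivalently `n - 2 ≤ n p < n - 1`), then
`P(X > n p) = P(X ≥ n - 1) = p^n + n p^{n-1}(1-p) > 1/4`. -/
theorem binomial_prob_gt_mean_case_nq_in_one_two
    (n : ℕ) (hn : 3 ≤ n) (p : ℝ) (hp0 : 0 ≤ p) (hp1 : p ≤ 1)
    (h1 : 1 < (n : ℝ) * (1 - p)) (h2 : (n : ℝ) * (1 - p) ≤ 2) :
    (∑ k ∈ (Finset.range (n + 1)).filter (fun k : ℕ => (n : ℝ) * p < (k : ℝ)),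
        (n.choose k : ℝ) * p ^ k * (1 - p) ^ (n - k))
      = ∑ k ∈ Finset.Icc (n - 1) n, (n.choose k : ℝ) * p ^ k * (1 - p) ^ (n - k) ∧
    (∑ k ∈ Finset.Icc (n - 1) n, (n.choose k : ℝ) * p ^ k * (1 - p) ^ (n - k))
      = p ^ n + n * p ^ (n - 1) * (1 - p) ∧
    (1 : ℝ) / 4 < p ^ n + n * p ^ (n - 1) * (1 - p) := by
  obtain ⟨m, rfl⟩ : ∃ m, n = m + 3 := ⟨n - 3, by omega⟩
  have hcast : ((m + 3 : ℕ) : ℝ) = (m : ℝ) + 3 := by push_cast; ring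
  have hub : ((m : ℝ) + 3) * p < (m : ℝ) + 2 := by nlinarith [hcast ▸ h1]
  have hlb : (m : ℝ) + 1 ≤ ((m : ℝ) + 3) * p := by nlinarith [hcast ▸ h2]
  -- Part 1 : set equality
  have hset : (Finset.range (m + 3 + 1)).filter (fun k : ℕ => ((m + 3 : ℕ) : ℝ) * p < (k : ℝ))
      = Finset.Icc (m + 3 - 1) (m + 3) := by
    ext k
    simp only [Finset.mem_filter, Finset.mem_range, Finset.mem_Icc, hcast]
    constructor
    · rintro ⟨hk1, hk2⟩
      constructor
      · by_contra hlt
        push_neg at hlt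
        have : (k : ℝ) ≤ (m : ℝ) + 1 := by
          have : k ≤ m + 1 := by omega
          exact_mod_cast this
        linarith
      · omega
    · rintro ⟨hk1, hk2⟩
      refine ⟨by omega, ?_⟩
      have : (m : ℝ) + 2 ≤ (k : ℝ) := by
        have : m + 2 ≤ k := by omega
        exact_mod_cast this
      linarith
  -- Part 2 : sum evaluation
  have hIcc : Finset.Icc (m + 3 - 1) (m + 3) = {m + 2, m + 3} := by
    have : m + 3 - 1 = m + 2 := by omega
    rw [this]
    ext k; simp [Finset.mem_Icc]; omega
  have hsum : (∑ k ∈ Finset.Icc (m + 3 - 1) (m + 3),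
        ((m + 3).choose k : ℝ) * p ^ k * (1 - p) ^ (m + 3 - k))
      = p ^ (m + 3) + (m + 3 : ℕ) * p ^ (m + 3 - 1) * (1 - p) := by
    rw [hIcc, Finset.sum_insert (by simp), Finset.sum_singleton]
    have hc1 : (m + 3).choose (m + 2) = m + 3 := by
      have := Nat.choose_succ_self_right (m + 2)
      simpa using this
    have hc2 : (m + 3).choose (m + 3) = 1 := Nat.choose_self _
    have he1 : m + 3 - (m + 2) = 1 := by omega
    have he2 : m + 3 - (m + 3) = 0 := by omega
    have he3 : m + 3 - 1 = m + 2 := by omega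
    rw [hc1, hc2, he1, he2, he3]
    push_cast
    ring
  refine ⟨by rw [hset], hsum, ?_⟩
  -- Part 3 : inequality
  have he3 : m + 3 - 1 = m + 2 := by omega
  rw [he3]
  set a : ℝ := ((m : ℝ) + 1) / ((m : ℝ) + 3) with ha_def
  have hm3 : (0 : ℝ) < (m : ℝ) + 3 := by positivity
  have ha0 : 0 ≤ a := by positivity
  have hap : a ≤ p := by
    rw [ha_def, div_le_iff₀ hm3]
    nlinarith
  have hga : (1 : ℝ) / 4 < ((m : ℝ)+3) * a^(m+2) - ((m : ℝ)+2) * a^(m+3) := by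
    have hval : ((m : ℝ)+3) * a^(m+2) - ((m : ℝ)+2) * a^(m+3)
        = (((m : ℝ)+1)^(m+2) * (3*(m : ℝ)+7)) / (((m : ℝ)+3)^(m+3)) := by
      rw [ha_def, div_pow, div_pow, eq_div_iff (by positivity)]
      have hy : ((m:ℝ)+3)^(m+2) ≠ 0 := by positivity
      rw [pow_succ ((m:ℝ)+3) (m+2), pow_succ ((m:ℝ)+1) (m+2)]
      field_simp
      ring
    rw [hval, lt_div_iff₀ (by positivity)]
    have := main_nat m
    have hcastineq : ((m : ℝ)+3)^(m+3) < 4*(3*(m : ℝ)+7)*((m : ℝ)+1)^(m+2) := by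
      exact_mod_cast this
    ring_nf at hcastineq ⊢
    linarith
  have hgm := g_mono m a p ha0 hap hp1
  have hfinal : p ^ (m + 3) + ((m + 3 : ℕ) : ℝ) * p ^ (m + 2) * (1 - p)
      = ((m : ℝ)+3) * p^(m+2) - ((m : ℝ)+2) * p^(m+3) := by
    push_cast
    ring
  rw [hfinal]
  linarith
end

section
/- Let X be a binomial random variable with parameters n and p, where n ≥ 2 is an integer and 0 < n(1−p) ≤ 1 (equivalently, n − 1 ≤ n p < n). Then P(X > n p) = P(X = n) = p^n ≥ (1 − 1/n)^n ≥ 1/4, and P(X > n p) = 1/4 only when n = 2 and p = 1/2. -/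
-- binomial lower bound: (a+1)^n ≥ a^n + n*a^(n-1)
lemma Ibinom (a : ℤ) (ha : 1 ≤ a) : ∀ n : ℕ, a^n + n*a^(n-1) ≤ (a+1)^n := by
  intro n
  induction n with
  | zero => simp
  | succ m ih =>
    have h1 : a^m ≤ a^(m-1) * a := by
      cases m with
      | zero => simpa using ha
      | succ k => rw [Nat.succ_sub_one, ← pow_succ]
    have h2 : (a^m + m * a^(m-1)) * (a+1) ≤ (a+1)^m * (a+1) := by
      apply mul_le_mul_of_nonneg_right ih
      linarith
    rw [← pow_succ] at h2
    have h3 : a^(m+1) + ((m:ℤ)+1) * a^m ≤ (a^m + m * a^(m-1)) * (a+1) := by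
      have h4 : (m:ℤ) * a^m ≤ (m:ℤ) * (a^(m-1) * a) := by
        apply mul_le_mul_of_nonneg_left h1 (by positivity)
      have h5 : a^(m+1) = a^m * a := pow_succ a m
      have h6 : (0:ℤ) ≤ a^(m-1) := by positivity
      nlinarith
    calc a^(m+1) + ((m+1 : ℕ):ℤ)*a^((m+1)-1)
        = a^(m+1) + ((m:ℤ)+1)*a^m := by push_cast; ring
      _ ≤ (a^m + m * a^(m-1)) * (a+1) := h3
      _ ≤ (a+1)^(m+1) := h2

-- key step inequality
lemma IA (n : ℕ) (hn : 2 ≤ n) :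
    ((n:ℤ)^2-1)^n * ((n:ℤ)+1) ≤ (n:ℤ)^(2*n+1) := by
  set x : ℤ := (n:ℤ) with hx
  have hx2 : (2:ℤ) ≤ x := by rw [hx]; exact_mod_cast hn
  have hpos : (0:ℤ) < (x^2+1)^n := by positivity
  have hcancel : ((x^2-1)^n * (x+1)) * (x^2+1)^n ≤ x^(2*n+1) * (x^2+1)^n → _ :=
    fun h => le_of_mul_le_mul_right h hpos
  apply hcancel
  -- (x²+1)^n ≥ x^(2n) + x^(2n-1)
  have hb := Ibinom (x^2) (by nlinarith) n
  have he1 : (x^2)^n = x^(2*n) := by rw [← pow_mul]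
  have he2 : (x^2)^(n-1) = x^(2*n-2) := by rw [← pow_mul]; congr 1; omega
  have hxn : (n:ℤ) * x^(2*n-2) = x^(2*n-1) := by
    have : x^(2*n-1) = x * x^(2*n-2) := by rw [← pow_succ']; congr 1; omega
    rw [this, hx]
  rw [he1, he2, hxn] at hb
  -- chain
  have hc1 : ((x^2-1)^n * (x+1)) * (x^2+1)^n = ((x^2-1)*(x^2+1))^n * (x+1) := by
    rw [mul_pow]; ring
  have hsq : (1:ℤ) ≤ x^2 := by nlinarith
  have hc2 : ((x^2-1)*(x^2+1))^n ≤ (x^4)^n := by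
    apply pow_le_pow_left₀ (mul_nonneg (by linarith) (by positivity))
    nlinarith
  have hc3 : (x^4)^n * (x+1) = (x^(2*n+1)) * (x^(2*n-1) + x^(2*n)) := by
    have e2 : x^(2*n+1) * x^(2*n-1) = x^(4*n) := by rw [← pow_add]; congr 1; omega
    have e3 : x^(2*n+1) * x^(2*n) = x^(4*n) * x := by rw [← pow_add, ← pow_succ]; congr 1; omega
    rw [← pow_mul]; linear_combination -e2 - e3
  have hc4 : x^(2*n+1) * (x^(2*n-1) + x^(2*n)) ≤ x^(2*n+1) * (x^2+1)^n := by
    apply mul_le_mul_of_nonneg_left _ (by positivity)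
    linarith [hb]
  calc ((x^2-1)^n * (x+1)) * (x^2+1)^n
      = ((x^2-1)*(x^2+1))^n * (x+1) := hc1
    _ ≤ (x^4)^n * (x+1) := by
        apply mul_le_mul_of_nonneg_right hc2; linarith
    _ = x^(2*n+1) * (x^(2*n-1) + x^(2*n)) := hc3
    _ ≤ x^(2*n+1) * (x^2+1)^n := hc4

-- step: (n+1)^(n+1) * (n-1)^n ≤ n^(n+1) * n^n
lemma Istep (n : ℕ) (hn : 2 ≤ n) :
    ((n:ℤ)+1)^(n+1) * ((n:ℤ)-1)^n ≤ (n:ℤ)^(n+1) * (n:ℤ)^n := by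
  have hA := IA n hn
  have he : ((n:ℤ)+1)^(n+1) * ((n:ℤ)-1)^n = ((n:ℤ)^2-1)^n * ((n:ℤ)+1) := by
    have : ((n:ℤ)^2-1) = ((n:ℤ)+1) * ((n:ℤ)-1) := by ring
    rw [this, mul_pow, pow_succ]; ring
  have he2 : (n:ℤ)^(n+1) * (n:ℤ)^n = (n:ℤ)^(2*n+1) := by
    rw [← pow_add]; congr 1; omega
  rw [he, he2]; exact hA

lemma Ikey (n : ℕ) (hn : 2 ≤ n) : (n:ℤ)^n ≤ 4*((n:ℤ)-1)^n := by
  induction n, hn using Nat.le_induction with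
  | base => norm_num
  | succ n hn ih =>
    have hx2 : (2:ℤ) ≤ (n:ℤ) := by exact_mod_cast hn
    have hpos : (0:ℤ) < ((n:ℤ)-1)^n := pow_pos (by linarith) n
    have h := Istep n hn
    have h2 : (n:ℤ)^(n+1) * (n:ℤ)^n ≤ (n:ℤ)^(n+1) * (4*((n:ℤ)-1)^n) := by
      apply mul_le_mul_of_nonneg_left ih (by positivity)
    have h3 : ((n:ℤ)+1)^(n+1) * ((n:ℤ)-1)^n ≤ (4*(n:ℤ)^(n+1)) * ((n:ℤ)-1)^n := by
      calc ((n:ℤ)+1)^(n+1) * ((n:ℤ)-1)^n ≤ (n:ℤ)^(n+1) * (n:ℤ)^n := h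
        _ ≤ (n:ℤ)^(n+1) * (4*((n:ℤ)-1)^n) := h2
        _ = (4*(n:ℤ)^(n+1)) * ((n:ℤ)-1)^n := by ring
    have h4 := le_of_mul_le_mul_right h3 hpos
    push_cast
    simpa using h4

lemma Ikey3 (n : ℕ) (hn : 3 ≤ n) : (n:ℤ)^n < 4*((n:ℤ)-1)^n := by
  induction n, hn using Nat.le_induction with
  | base => norm_num
  | succ n hn ih =>
    have hn2 : 2 ≤ n := by omega
    have hx2 : (2:ℤ) ≤ (n:ℤ) := by exact_mod_cast hn2
    have hpos : (0:ℤ) < ((n:ℤ)-1)^n := pow_pos (by linarith) n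
    have h := Istep n hn2
    have h2 : (n:ℤ)^(n+1) * (n:ℤ)^n < (n:ℤ)^(n+1) * (4*((n:ℤ)-1)^n) := by
      apply mul_lt_mul_of_pos_left ih (by positivity)
    have h3 : ((n:ℤ)+1)^(n+1) * ((n:ℤ)-1)^n < (4*(n:ℤ)^(n+1)) * ((n:ℤ)-1)^n := by
      calc ((n:ℤ)+1)^(n+1) * ((n:ℤ)-1)^n ≤ (n:ℤ)^(n+1) * (n:ℤ)^n := h
        _ < (n:ℤ)^(n+1) * (4*((n:ℤ)-1)^n) := h2
        _ = (4*(n:ℤ)^(n+1)) * ((n:ℤ)-1)^n := by ring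
    have h4 := lt_of_mul_lt_mul_right h3 (le_of_lt hpos)
    push_cast
    simpa using h4

/-- If `n ≥ 2` and `0 < n(1-p) ≤ 1` (equivalently `n - 1 ≤ n p < n`), then
`P(X > n p) = P(X = n) = p^n ≥ (1 - 1/n)^n ≥ 1/4`, with `P(X > n p) = 1/4` only
when `n = 2` and `p = 1/2`. -/
theorem binomial_prob_gt_mean_case_nq_le_one
    (n : ℕ) (hn : 2 ≤ n) (p : ℝ) (hp1 : p ≤ 1)
    (h1 : 0 < (n : ℝ) * (1 - p)) (h2 : (n : ℝ) * (1 - p) ≤ 1) :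
    (∑ k ∈ (Finset.range (n + 1)).filter (fun k : ℕ => (n : ℝ) * p < (k : ℝ)),
        (n.choose k : ℝ) * p ^ k * (1 - p) ^ (n - k)) = p ^ n ∧
    (1 - 1 / (n : ℝ)) ^ n ≤ p ^ n ∧
    (1 : ℝ) / 4 ≤ (1 - 1 / (n : ℝ)) ^ n ∧
    (p ^ n = 1 / 4 → n = 2 ∧ p = 1 / 2) := by
  have hn2 : (2:ℝ) ≤ (n:ℝ) := by exact_mod_cast hn
  have hn0 : (0:ℝ) < (n:ℝ) := by linarith
  -- basic bounds on p
  have hple : 1 - 1/(n:ℝ) ≤ p := by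
    have : 1 - p ≤ 1/(n:ℝ) := by
      rw [le_div_iff₀ hn0]; linarith [h2]
    linarith
  have hlb0 : (0:ℝ) ≤ 1 - 1/(n:ℝ) := by
    have : 1/(n:ℝ) ≤ 1/2 := by
      apply div_le_div_of_nonneg_left <;> linarith
    linarith
  have hplt1 : p < 1 := by nlinarith
  -- Part 1 : the sum
  have hfilter : (Finset.range (n + 1)).filter (fun k : ℕ => (n : ℝ) * p < (k : ℝ)) = {n} := by
    ext k
    simp only [Finset.mem_filter, Finset.mem_range, Finset.mem_singleton]
    constructor
    · rintro ⟨hk1, hk2⟩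
      have hge : (n:ℝ) - 1 ≤ (n:ℝ) * p := by nlinarith
      have : (n:ℝ) < (k:ℝ) + 1 := by linarith
      have : n < k + 1 := by exact_mod_cast this
      omega
    · rintro rfl
      refine ⟨by omega, ?_⟩
      nlinarith
  have hsum : (∑ k ∈ (Finset.range (n + 1)).filter (fun k : ℕ => (n : ℝ) * p < (k : ℝ)),
        (n.choose k : ℝ) * p ^ k * (1 - p) ^ (n - k)) = p ^ n := by
    rw [hfilter, Finset.sum_singleton, Nat.choose_self, Nat.sub_self]
    simp
  -- Part 2
  have hpart2 : (1 - 1 / (n : ℝ)) ^ n ≤ p ^ n := pow_le_pow_left₀ hlb0 hple n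
  -- Part 3 : from the integer inequality
  have hcast : (1 - 1 / (n : ℝ)) = ((n:ℝ) - 1) / (n:ℝ) := by
    field_simp
  have hpart3 : (1 : ℝ) / 4 ≤ (1 - 1 / (n : ℝ)) ^ n := by
    have hkey := Ikey n hn
    have hkeyR : ((n:ℝ))^n ≤ 4 * ((n:ℝ) - 1)^n := by exact_mod_cast hkey
    rw [hcast, div_pow, le_div_iff₀ (by positivity)]
    linarith
  refine ⟨hsum, hpart2, hpart3, ?_⟩
  -- Part 4
  intro heq
  have hn2' : n = 2 := by
    by_contra hne
    have hn3 : 3 ≤ n := by omega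
    have hkey := Ikey3 n hn3
    have hkeyR : ((n:ℝ))^n < 4 * ((n:ℝ) - 1)^n := by exact_mod_cast hkey
    have : (1:ℝ)/4 < (1 - 1 / (n : ℝ)) ^ n := by
      rw [hcast, div_pow, lt_div_iff₀ (by positivity)]
      linarith
    linarith [hpart2]
  subst hn2'
  refine ⟨rfl, ?_⟩
  have hp2 : p^2 = 1/4 := heq
  have hph : (1:ℝ)/2 ≤ p := by
    norm_num at hple
    linarith
  nlinarith
end
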